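/- arXiv:0910.3926 — 6 statements merged into one kernel-verified Lean document; each statement's English description precedes it below -/
import Mathlib

section
/- For every pair of positive integers k and r there exists a positive integer HJ(k, r) such that for every n ≥ HJ(k, r) and every r-colouring of [k]^n there is a monochromatic combinatorial line. -/
/-- The point of a combinatorial line (with wildcard set `W` and fixed values `x`)
obtained by setting all wildcard coordinates equal to `j`. -/
def linePt {n k : ℕ} (W : Finset (Fin n)) (x : Fin n → Fin k) (j : Fin k) :
    Fin n → Fin k :=
  fun i => if i ∈ W then j else x i

/-- Hales–Jewett theorem: for all `k, r` there is `N` such that for all `n ≥ N`,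
every `r`-colouring of `[k]^n` has a monochromatic combinatorial line. -/
theorem hales_jewett (k r : ℕ) (hk : 0 < k) (hr : 0 < r) :
    ∃ N : ℕ, 0 < N ∧ ∀ n : ℕ, N ≤ n → ∀ κ : (Fin n → Fin k) → Fin r,
      ∃ (W : Finset (Fin n)) (x : Fin n → Fin k) (c : Fin r),
        W.Nonempty ∧ ∀ j : Fin k, κ (linePt W x j) = c := by
  obtain ⟨ι, ιfin, hι⟩ :=
    Combinatorics.Line.exists_mono_in_high_dimension (Fin k) (Fin r)
  set N := Fintype.card ι with hN
  -- N is positive: apply hι to a constant coloring, the resulting line has a wildcard index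
  have hNpos : 0 < N := by
    obtain ⟨l, _⟩ := hι (fun _ => ⟨0, hr⟩)
    obtain ⟨i, _⟩ := l.proper
    exact Fintype.card_pos_iff.mpr ⟨i⟩
  refine ⟨N, hNpos, fun n hn κ => ?_⟩
  set a : Fin k := ⟨0, hk⟩ with ha
  -- pad a point of [k]^N to a point of [k]^n
  set pad : (Fin N → Fin k) → (Fin n → Fin k) :=
    fun v i => if h : (i : ℕ) < N then v ⟨i, h⟩ else a with hpad
  obtain ⟨l, c, hc⟩ := hι (fun v => κ (pad (v ∘ (Fintype.equivFin ι).symm)))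
  set l' : Fin N → Option (Fin k) := fun i => l.idxFun ((Fintype.equivFin ι).symm i)
    with hl'
  set W : Finset (Fin n) :=
    Finset.univ.filter (fun i => ∃ h : (i : ℕ) < N, l' ⟨i, h⟩ = none) with hW
  set x : Fin n → Fin k :=
    fun i => if h : (i : ℕ) < N then (l' ⟨i, h⟩).getD a else a with hx
  have hWne : W.Nonempty := by
    obtain ⟨i0, hi0⟩ := l.proper
    refine ⟨⟨(Fintype.equivFin ι i0 : ℕ), lt_of_lt_of_le (Fintype.equivFin ι i0).2 hn⟩, ?_⟩
    simp only [hW, Finset.mem_filter, Finset.mem_univ, true_and]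
    exact ⟨(Fintype.equivFin ι i0).2, by simp [hl', hi0]⟩
  refine ⟨W, x, c, hWne, fun j => ?_⟩
  have key : linePt W x j = pad ((fun i => l j ((Fintype.equivFin ι).symm i))) := by
    funext i
    simp only [linePt, hpad]
    by_cases h : (i : ℕ) < N
    · simp only [h, dif_pos]
      by_cases hw : l' ⟨i, h⟩ = none
      · have hiW : i ∈ W := by
          simp only [hW, Finset.mem_filter, Finset.mem_univ, true_and]; exact ⟨h, hw⟩
        rw [if_pos hiW]
        exact ((congrArg (fun o => o.getD j) hw).trans rfl).symm
      · have hiW : i ∉ W := by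
          simp only [hW, Finset.mem_filter, Finset.mem_univ, true_and]
          rintro ⟨h', hw'⟩; exact hw hw'
        rw [if_neg hiW]
        obtain ⟨y, hy⟩ := Option.ne_none_iff_exists'.mp hw
        have h1 : x i = y := by rw [hx]; simp only [dif_pos h]; rw [hy]; rfl
        have h2 : (l' ⟨(i : ℕ), h⟩).getD j = y := by rw [hy]; rfl
        exact h1.trans h2.symm
    · have hiW : i ∉ W := by
        simp only [hW, Finset.mem_filter, Finset.mem_univ, true_and]
        rintro ⟨h', _⟩; exact h h'
      rw [if_neg hiW]
      simp [hx, h]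
  rw [key]
  have := hc j
  exact this
end

section
/- Let A be a subset of [2]^n of equal-slices density δ. Then the set of (possibly degenerate) combinatorial lines all of whose points lie in A, viewed as a subset of [3]^n via the correspondence between lines in [2]^n and points of [3]^n, has equal-slices density at least δ²(n+1)/(n+2). -/
open Finset

/-- The equal-slices probability of a single string `x ∈ [k]^n`: one first chooses
uniformly a `k`-tuple of nonnegative integers summing to `n` (there are
`(n+k-1).choose (k-1)` of them), then a uniformly random string with those
coordinate counts (there are `multinomial` many in the slice of `x`). -/
noncomputable def slicePr (k n : ℕ) (x : Fin n → Fin k) : ℝ :=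
  (((n + k - 1).choose (k - 1) : ℝ))⁻¹ *
    ((Nat.multinomial Finset.univ
      (fun j : Fin k => (Finset.univ.filter fun i => x i = j).card) : ℝ))⁻¹

/-- The equal-slices measure of a set `A ⊆ [k]^n`. -/
noncomputable def esDensity {k n : ℕ} (A : Finset (Fin n → Fin k)) : ℝ :=
  ∑ x ∈ A, slicePr k n x

/-- A point `y ∈ [3]^n` corresponds to a possibly degenerate line in `[2]^n`
(wildcard set `{i : y i = 3}`); `linePoint y j` is the point of that line obtained
by replacing all 3s by the value `j ∈ [2]`. -/
def linePoint {n : ℕ} (y : Fin n → Fin 3) (j : Fin 2) : Fin n → Fin 2 :=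
  fun i => if h : (y i : ℕ) < 2 then (⟨(y i : ℕ), h⟩ : Fin 2) else j

/-! ### Auxiliary machinery -/

section PermCount

variable {α κ : Type*} [Fintype α] [DecidableEq α] [DecidableEq κ] [Fintype κ]

/-- The permutations carrying the pattern `g` to the pattern `f` correspond to tuples of
bijections between the respective fibers. -/
def permFilterEquiv (f g : α → κ) :
    {π : Equiv.Perm α // ∀ j, f (π j) = g j} ≃ ∀ c, {j // g j = c} ≃ {i // f i = c} where
  toFun π c := Equiv.subtypeEquiv (π : Equiv.Perm α) (fun j => by
    constructor
    · intro h; rw [π.2 j, h]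
    · intro h; rw [← π.2 j, h])
  invFun e := ⟨(Equiv.sigmaFiberEquiv g).symm.trans ((Equiv.sigmaCongrRight e).trans
      (Equiv.sigmaFiberEquiv f)), fun j => ((e (g j)) ⟨j, rfl⟩).2⟩
  left_inv π := Subtype.ext (Equiv.ext fun j => rfl)
  right_inv e := by
    funext c
    refine Equiv.ext fun x => ?_
    obtain ⟨j, hj⟩ := x
    subst hj
    exact Subtype.ext rfl

lemma card_permFilter (f g : α → κ)
    (h : ∀ c, (univ.filter fun j => g j = c).card = (univ.filter fun i => f i = c).card) :
    (univ.filter fun π : Equiv.Perm α => ∀ j, f (π j) = g j).card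
      = ∏ c, Nat.factorial ((univ.filter fun i => f i = c).card) := by
  classical
  rw [← Fintype.card_subtype]
  rw [Fintype.card_congr (permFilterEquiv f g)]
  rw [Fintype.card_pi]
  refine Finset.prod_congr rfl fun c _ => ?_
  rw [Fintype.card_equiv (Fintype.equivOfCardEq (by simp only [Fintype.card_subtype]; exact h c))]
  simp [Fintype.card_subtype, h c]

omit [Fintype κ] in
lemma permFilter_empty (f g : α → κ) (c : κ)
    (h : (univ.filter fun j => g j = c).card ≠ (univ.filter fun i => f i = c).card) :
    (univ.filter fun π : Equiv.Perm α => ∀ j, f (π j) = g j) = ∅ := by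
  rw [Finset.filter_eq_empty_iff]
  intro π _ hπ
  apply h
  have h1 : (univ.filter fun j => g j = c) = (univ.filter fun j => f (π j) = c) := by
    apply Finset.filter_congr
    intro j _
    rw [hπ j]
  rw [h1, ← Fintype.card_subtype, ← Fintype.card_subtype]
  exact Fintype.card_congr (Equiv.subtypeEquiv (π : Equiv.Perm α) (fun j => Iff.rfl))

end PermCount

/-- The monotone word patterns in `[2]^n`. -/
def gpat2 (n u : ℕ) : Fin n → Fin 2 := fun j => if (j:ℕ) < u then 0 else 1

/-- The monotone word patterns in `[3]^n` (with wildcard symbol `2` in the middle block). -/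
def gpat3 (n s w : ℕ) : Fin n → Fin 3 :=
  fun j => if (j:ℕ) < s then 0 else if (j:ℕ) < s + w then 2 else 1

/-- Coordinate counts of a word. -/
def cnt {n k : ℕ} (x : Fin n → Fin k) (c : Fin k) : ℕ := (univ.filter fun i => x i = c).card

lemma cnt_sum {n k : ℕ} (x : Fin n → Fin k) : ∑ c, cnt x c = n := by
  classical
  have := Finset.card_eq_sum_card_fiberwise (f := x) (s := univ) (t := univ)
    (fun i _ => mem_univ _)
  simpa [cnt] using this.symm

lemma cnt_le {n k : ℕ} (x : Fin n → Fin k) (c : Fin k) : cnt x c ≤ n := by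
  have := Finset.card_filter_le (univ : Finset (Fin n)) (fun i => x i = c)
  simpa [cnt] using this

lemma card_filter_val {n : ℕ} (P : ℕ → Prop) [DecidablePred P] :
    (univ.filter fun j : Fin n => P (j:ℕ)).card = ((range n).filter P).card := by
  rw [Finset.card_filter, Finset.card_filter]
  exact Fin.sum_univ_eq_sum_range (fun a => if P a then 1 else 0) n

lemma cnt_gpat2_zero {n u : ℕ} (hu : u ≤ n) : cnt (gpat2 n u) 0 = u := by
  have h1 : ∀ j : Fin n, gpat2 n u j = 0 ↔ (j:ℕ) < u := by
    intro j; unfold gpat2; split_ifs with h <;> simp_all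
  have h3 : (univ.filter fun j : Fin n => gpat2 n u j = 0) = univ.filter fun j : Fin n => (j:ℕ) < u :=
    filter_congr (fun j _ => h1 j)
  rw [cnt, h3]
  refine Eq.trans (card_filter_val (fun a => a < u)) ?_
  have h2 : (range n).filter (fun a => a < u) = range u := by ext a; simp; omega
  rw [h2, card_range]

lemma cnt_gpat2_one {n u : ℕ} (hu : u ≤ n) : cnt (gpat2 n u) 1 = n - u := by
  have h1 : ∀ j : Fin n, gpat2 n u j = 1 ↔ ¬ (j:ℕ) < u := by
    intro j; unfold gpat2; split_ifs with h <;> simp_all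
  have h3 : (univ.filter fun j : Fin n => gpat2 n u j = 1) = univ.filter fun j : Fin n => ¬ (j:ℕ) < u :=
    filter_congr (fun j _ => h1 j)
  rw [cnt, h3]
  refine Eq.trans (card_filter_val (fun a => ¬ a < u)) ?_
  have h2 : (range n).filter (fun a => ¬ a < u) = Finset.Ico u n := by ext a; simp; omega
  rw [h2, Nat.card_Ico]

lemma cnt_gpat3_zero {n s w : ℕ} (h : s + w ≤ n) : cnt (gpat3 n s w) 0 = s := by
  have h1 : ∀ j : Fin n, gpat3 n s w j = 0 ↔ (j:ℕ) < s := by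
    intro j; unfold gpat3; split_ifs with ha hb <;> simp_all
  have h3 : (univ.filter fun j : Fin n => gpat3 n s w j = 0) = univ.filter fun j : Fin n => (j:ℕ) < s :=
    filter_congr (fun j _ => h1 j)
  rw [cnt, h3]
  refine Eq.trans (card_filter_val (fun a => a < s)) ?_
  have h2 : (range n).filter (fun a => a < s) = range s := by ext a; simp; omega
  rw [h2, card_range]

lemma cnt_gpat3_two {n s w : ℕ} (h : s + w ≤ n) : cnt (gpat3 n s w) 2 = w := by
  have h1 : ∀ j : Fin n, gpat3 n s w j = 2 ↔ (¬ (j:ℕ) < s ∧ (j:ℕ) < s + w) := by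
    intro j; unfold gpat3; split_ifs with ha hb <;> simp_all
  have h3 : (univ.filter fun j : Fin n => gpat3 n s w j = 2) = univ.filter fun j : Fin n => ¬ (j:ℕ) < s ∧ (j:ℕ) < s + w :=
    filter_congr (fun j _ => h1 j)
  rw [cnt, h3]
  refine Eq.trans (card_filter_val (fun a => ¬ a < s ∧ a < s + w)) ?_
  have h2 : (range n).filter (fun a => ¬ a < s ∧ a < s + w) = Finset.Ico s (s + w) := by
    ext a; simp; omega
  rw [h2, Nat.card_Ico]; omega

lemma cnt_gpat3_one {n s w : ℕ} (h : s + w ≤ n) : cnt (gpat3 n s w) 1 = n - s - w := by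
  have h1 : ∀ j : Fin n, gpat3 n s w j = 1 ↔ (¬ (j:ℕ) < s ∧ ¬ (j:ℕ) < s + w) := by
    intro j; unfold gpat3; split_ifs with ha hb <;> simp_all
  have h3 : (univ.filter fun j : Fin n => gpat3 n s w j = 1) = univ.filter fun j : Fin n => ¬ (j:ℕ) < s ∧ ¬ (j:ℕ) < s + w :=
    filter_congr (fun j _ => h1 j)
  rw [cnt, h3]
  refine Eq.trans (card_filter_val (fun a => ¬ a < s ∧ ¬ a < s + w)) ?_
  have h2 : (range n).filter (fun a => ¬ a < s ∧ ¬ a < s + w) = Finset.Ico (s + w) n := by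
    ext a; simp; omega
  rw [h2, Nat.card_Ico]; omega

lemma comp_symm_eq {n k : ℕ} (π : Equiv.Perm (Fin n)) (p x : Fin n → Fin k) :
    ((fun i => p (π.symm i)) = x) ↔ ∀ j, x (π j) = p j := by
  constructor
  · intro h j; rw [← h]; simp
  · intro h; funext i
    have := h (π.symm i)
    simp at this
    rw [this]

lemma perm_count_2 {n : ℕ} (x : Fin n → Fin 2) (u : ℕ) (hu : u ≤ n) :
    (univ.filter fun π : Equiv.Perm (Fin n) => ∀ j, x (π j) = gpat2 n u j).card
      = if cnt x 0 = u then Nat.factorial (cnt x 0) * Nat.factorial (cnt x 1) else 0 := by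
  have hsum : cnt x 0 + cnt x 1 = n := by
    have := cnt_sum x; rwa [Fin.sum_univ_two] at this
  split_ifs with hc
  · have hcnts : ∀ c, cnt (gpat2 n u) c = cnt x c := by
      intro c
      fin_cases c
      · show cnt (gpat2 n u) 0 = cnt x 0
        rw [cnt_gpat2_zero hu, hc]
      · show cnt (gpat2 n u) 1 = cnt x 1
        rw [cnt_gpat2_one hu]; omega
    have key := card_permFilter x (gpat2 n u) hcnts
    have key2 : #(filter (fun π : Equiv.Perm (Fin n) => ∀ (j : Fin n), x (π j) = gpat2 n u j) univ)
        = ∏ c : Fin 2, Nat.factorial ((univ.filter fun i => x i = c).card) := by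
      convert key using 2 <;> (ext π; simp only [Finset.mem_filter])
    rw [key2, Fin.prod_univ_two]
    rfl
  · have hne : cnt (gpat2 n u) 0 ≠ cnt x 0 := by rw [cnt_gpat2_zero hu]; omega
    have key := permFilter_empty x (gpat2 n u) 0 hne
    have key2 : (filter (fun π : Equiv.Perm (Fin n) => ∀ (j : Fin n), x (π j) = gpat2 n u j) univ)
        = (∅ : Finset (Equiv.Perm (Fin n))) := by
      convert key using 2 <;> (ext π; simp only [Finset.mem_filter])
    rw [key2, Finset.card_empty]

lemma perm_count_3 {n : ℕ} (y : Fin n → Fin 3) (s w : ℕ) (h : s + w ≤ n) :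
    (univ.filter fun π : Equiv.Perm (Fin n) => ∀ j, y (π j) = gpat3 n s w j).card
      = if cnt y 0 = s ∧ cnt y 2 = w then
          Nat.factorial (cnt y 0) * Nat.factorial (cnt y 1) * Nat.factorial (cnt y 2) else 0 := by
  have hsum : cnt y 0 + cnt y 1 + cnt y 2 = n := by
    have := cnt_sum y; rwa [Fin.sum_univ_three] at this
  split_ifs with hc
  · have hcnts : ∀ c, cnt (gpat3 n s w) c = cnt y c := by
      intro c
      fin_cases c
      · show cnt (gpat3 n s w) 0 = cnt y 0
        rw [cnt_gpat3_zero h, hc.1]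
      · show cnt (gpat3 n s w) 1 = cnt y 1
        rw [cnt_gpat3_one h]; omega
      · show cnt (gpat3 n s w) 2 = cnt y 2
        rw [cnt_gpat3_two h, hc.2]
    have key := card_permFilter y (gpat3 n s w) hcnts
    have key2 : #(filter (fun π : Equiv.Perm (Fin n) => ∀ (j : Fin n), y (π j) = gpat3 n s w j) univ)
        = ∏ c : Fin 3, Nat.factorial ((univ.filter fun i => y i = c).card) := by
      convert key using 2 <;> (ext π; simp only [Finset.mem_filter])
    rw [key2, Fin.prod_univ_three]
    rfl
  · rcases Decidable.not_and_iff_or_not.mp hc with hc0 | hc2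
    · have hne : cnt (gpat3 n s w) 0 ≠ cnt y 0 := by rw [cnt_gpat3_zero h]; omega
      have key := permFilter_empty y (gpat3 n s w) 0 hne
      have key2 : (filter (fun π : Equiv.Perm (Fin n) => ∀ (j : Fin n), y (π j) = gpat3 n s w j) univ)
        = (∅ : Finset (Equiv.Perm (Fin n))) := by
        convert key using 2 <;> (ext π; simp only [Finset.mem_filter])
      rw [key2, Finset.card_empty]
    · have hne : cnt (gpat3 n s w) 2 ≠ cnt y 2 := by rw [cnt_gpat3_two h]; omega
      have key := permFilter_empty y (gpat3 n s w) 2 hne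
      have key2 : (filter (fun π : Equiv.Perm (Fin n) => ∀ (j : Fin n), y (π j) = gpat3 n s w j) univ)
        = (∅ : Finset (Equiv.Perm (Fin n))) := by
        convert key using 2 <;> (ext π; simp only [Finset.mem_filter])
      rw [key2, Finset.card_empty]

lemma sum2 {n : ℕ} (A : Finset (Fin n → Fin 2)) :
    ∑ π : Equiv.Perm (Fin n),
      ((range (n+1)).filter (fun u => (fun i => gpat2 n u (π.symm i)) ∈ A)).card
      = ∑ x ∈ A, Nat.factorial (cnt x 0) * Nat.factorial (cnt x 1) := by
  classical
  calc ∑ π : Equiv.Perm (Fin n),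
      ((range (n+1)).filter (fun u => (fun i => gpat2 n u (π.symm i)) ∈ A)).card
      = ∑ π : Equiv.Perm (Fin n), ∑ u ∈ range (n+1), ∑ x ∈ A,
          if (∀ j, x (π j) = gpat2 n u j) then 1 else 0 := by
        refine Finset.sum_congr rfl fun π _ => ?_
        rw [Finset.card_filter]
        refine Finset.sum_congr rfl fun u _ => ?_
        rw [← Finset.sum_ite_eq' A (fun i => gpat2 n u (π.symm i)) (fun _ => 1)]
        refine Finset.sum_congr rfl fun x _ => ?_
        refine if_congr ?_ rfl rfl
        rw [eq_comm]
        exact comp_symm_eq π (gpat2 n u) x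
    _ = ∑ x ∈ A, ∑ u ∈ range (n+1), ∑ π : Equiv.Perm (Fin n),
          if (∀ j, x (π j) = gpat2 n u j) then 1 else 0 := by
        rw [Finset.sum_comm]
        refine Eq.trans (Finset.sum_congr rfl fun u _ => Finset.sum_comm) ?_
        exact Finset.sum_comm
    _ = ∑ x ∈ A, Nat.factorial (cnt x 0) * Nat.factorial (cnt x 1) := by
        refine Finset.sum_congr rfl fun x _ => ?_
        have h4 : ∀ u ∈ range (n+1), (∑ π : Equiv.Perm (Fin n),
            if (∀ j, x (π j) = gpat2 n u j) then 1 else 0)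
            = if cnt x 0 = u then Nat.factorial (cnt x 0) * Nat.factorial (cnt x 1) else 0 := by
          intro u hu
          rw [← Finset.card_filter]
          exact perm_count_2 x u (by simpa using Nat.lt_succ_iff.mp (mem_range.mp hu))
        rw [Finset.sum_congr rfl h4, Finset.sum_ite_eq]
        simp [Nat.lt_succ_iff, cnt_le]

lemma sum3 {n : ℕ} (L : Finset (Fin n → Fin 3)) :
    ∑ π : Equiv.Perm (Fin n),
      ((((range (n+1)) ×ˢ (range (n+1))).filter (fun p => p.1 + p.2 ≤ n)).filter
        (fun p => (fun i => gpat3 n p.1 p.2 (π.symm i)) ∈ L)).card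
      = ∑ y ∈ L, Nat.factorial (cnt y 0) * Nat.factorial (cnt y 1) * Nat.factorial (cnt y 2) := by
  classical
  set I := (((range (n+1)) ×ˢ (range (n+1))).filter (fun p => p.1 + p.2 ≤ n)) with hI
  calc ∑ π : Equiv.Perm (Fin n),
      (I.filter (fun p => (fun i => gpat3 n p.1 p.2 (π.symm i)) ∈ L)).card
      = ∑ π : Equiv.Perm (Fin n), ∑ p ∈ I, ∑ y ∈ L,
          if (∀ j, y (π j) = gpat3 n p.1 p.2 j) then 1 else 0 := by
        refine Finset.sum_congr rfl fun π _ => ?_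
        rw [Finset.card_filter]
        refine Finset.sum_congr rfl fun p _ => ?_
        rw [← Finset.sum_ite_eq' L (fun i => gpat3 n p.1 p.2 (π.symm i)) (fun _ => 1)]
        refine Finset.sum_congr rfl fun y _ => ?_
        refine if_congr ?_ rfl rfl
        rw [eq_comm]
        exact comp_symm_eq π (gpat3 n p.1 p.2) y
    _ = ∑ y ∈ L, ∑ p ∈ I, ∑ π : Equiv.Perm (Fin n),
          if (∀ j, y (π j) = gpat3 n p.1 p.2 j) then 1 else 0 := by
        rw [Finset.sum_comm]
        refine Eq.trans (Finset.sum_congr rfl fun p _ => Finset.sum_comm) ?_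
        exact Finset.sum_comm
    _ = ∑ y ∈ L, Nat.factorial (cnt y 0) * Nat.factorial (cnt y 1) * Nat.factorial (cnt y 2) := by
        refine Finset.sum_congr rfl fun y _ => ?_
        have hstep : ∀ p ∈ I, (∑ π : Equiv.Perm (Fin n),
            if (∀ j, y (π j) = gpat3 n p.1 p.2 j) then 1 else 0)
            = if (cnt y 0, cnt y 2) = p then
                Nat.factorial (cnt y 0) * Nat.factorial (cnt y 1) * Nat.factorial (cnt y 2)
              else 0 := by
          intro p hp
          rw [← Finset.card_filter]
          have hple : p.1 + p.2 ≤ n := (mem_filter.mp hp).2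
          rw [perm_count_3 y p.1 p.2 hple]
          congr 1
          rw [eq_iff_iff, Prod.ext_iff]
        rw [Finset.sum_congr rfl hstep, Finset.sum_ite_eq]
        have hmem : (cnt y 0, cnt y 2) ∈ I := by
          have := cnt_sum y
          rw [Fin.sum_univ_three] at this
          simp only [hI, mem_filter, mem_product, mem_range]
          omega
        simp [hmem]

lemma linePoint_gpat3_zero {n s w : ℕ} : linePoint (gpat3 n s w) 0 = gpat2 n (s+w) := by
  funext q
  simp only [linePoint, gpat3, gpat2]
  by_cases h1 : (q:ℕ) < s <;> by_cases h2 : (q:ℕ) < s + w <;>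
    first | omega | simp [h1, h2, Fin.ext_iff]

lemma linePoint_gpat3_one {n s w : ℕ} : linePoint (gpat3 n s w) 1 = gpat2 n s := by
  funext q
  simp only [linePoint, gpat3, gpat2]
  by_cases h1 : (q:ℕ) < s <;> by_cases h2 : (q:ℕ) < s + w <;>
    first | omega | simp [h1, h2, Fin.ext_iff]

lemma card_le_pairs (M : Finset ℕ) :
    M.card ^ 2 ≤ 2 * ((M ×ˢ M).filter (fun q => q.1 ≤ q.2)).card := by
  classical
  have hswap : ((M ×ˢ M).filter (fun q => q.1 ≤ q.2)).card
      = ((M ×ˢ M).filter (fun q => q.2 ≤ q.1)).card := by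
    apply Finset.card_bij (fun q _ => (q.2, q.1))
    · intro q hq
      simp only [mem_filter, mem_product] at hq ⊢
      exact ⟨⟨hq.1.2, hq.1.1⟩, hq.2⟩
    · intro a ha b hb hab
      simp only [Prod.ext_iff] at hab
      exact Prod.ext hab.2 hab.1
    · intro q hq
      simp only [mem_filter, mem_product] at hq
      exact ⟨(q.2, q.1), by simp [mem_filter, mem_product, hq.1.1, hq.1.2, hq.2], rfl⟩
  have hunion : ((M ×ˢ M).filter (fun q => q.1 ≤ q.2)) ∪ ((M ×ˢ M).filter (fun q => q.2 ≤ q.1))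
      = M ×ˢ M := by
    rw [← Finset.filter_or]
    apply Finset.filter_true_of_mem
    intro q _
    omega
  have hcard := Finset.card_union_add_card_inter
    ((M ×ˢ M).filter (fun q => q.1 ≤ q.2)) ((M ×ˢ M).filter (fun q => q.2 ≤ q.1))
  rw [hunion, Finset.card_product] at hcard
  have hsq : M.card ^ 2 = M.card * M.card := sq M.card
  omega

lemma prod_fact2_real {n : ℕ} (x : Fin n → Fin 2) :
    ((Nat.factorial (cnt x 0) * Nat.factorial (cnt x 1) : ℕ) : ℝ)
      = (n.factorial : ℝ) * ((Nat.multinomial Finset.univ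
          (fun j : Fin 2 => (Finset.univ.filter fun i => x i = j).card) : ℝ))⁻¹ := by
  have hspec := Nat.multinomial_spec (univ : Finset (Fin 2))
    (fun j : Fin 2 => (Finset.univ.filter fun i => x i = j).card)
  have hsum : ∑ j : Fin 2, (Finset.univ.filter fun i => x i = j).card = n := cnt_sum x
  rw [hsum, Fin.prod_univ_two] at hspec
  have hMpos := Nat.multinomial_pos (univ : Finset (Fin 2))
    (fun j : Fin 2 => (Finset.univ.filter fun i => x i = j).card)
  have hMne : ((Nat.multinomial Finset.univ
      (fun j : Fin 2 => (Finset.univ.filter fun i => x i = j).card) : ℕ) : ℝ) ≠ 0 := by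
    exact_mod_cast hMpos.ne'
  rw [← div_eq_mul_inv, eq_div_iff hMne]
  exact_mod_cast hspec

lemma prod_fact3_real {n : ℕ} (y : Fin n → Fin 3) :
    ((Nat.factorial (cnt y 0) * Nat.factorial (cnt y 1) * Nat.factorial (cnt y 2) : ℕ) : ℝ)
      = (n.factorial : ℝ) * ((Nat.multinomial Finset.univ
          (fun j : Fin 3 => (Finset.univ.filter fun i => y i = j).card) : ℝ))⁻¹ := by
  have hspec := Nat.multinomial_spec (univ : Finset (Fin 3))
    (fun j : Fin 3 => (Finset.univ.filter fun i => y i = j).card)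
  have hsum : ∑ j : Fin 3, (Finset.univ.filter fun i => y i = j).card = n := cnt_sum y
  rw [hsum, Fin.prod_univ_three] at hspec
  have hMpos := Nat.multinomial_pos (univ : Finset (Fin 3))
    (fun j : Fin 3 => (Finset.univ.filter fun i => y i = j).card)
  have hMne : ((Nat.multinomial Finset.univ
      (fun j : Fin 3 => (Finset.univ.filter fun i => y i = j).card) : ℕ) : ℝ) ≠ 0 := by
    exact_mod_cast hMpos.ne'
  rw [← div_eq_mul_inv, eq_div_iff hMne]
  exact_mod_cast hspec

/-- Probabilistic Sperner theorem: if `A ⊆ [2]^n` has equal-slices density `δ`,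
then the set of (possibly degenerate) combinatorial lines contained in `A`,
viewed as a subset of `[3]^n`, has equal-slices density at least `δ²(n+1)/(n+2)`. -/
theorem probabilistic_sperner (n : ℕ) (hn : 0 < n) (δ : ℝ)
    (A : Finset (Fin n → Fin 2)) (hA : esDensity A = δ) :
    δ ^ 2 * ((n : ℝ) + 1) / ((n : ℝ) + 2) ≤
      esDensity ((Finset.univ : Finset (Fin n → Fin 3)).filter
        fun y => ∀ j : Fin 2, linePoint y j ∈ A) := by
  classical
  subst hA
  set L := ((Finset.univ : Finset (Fin n → Fin 3)).filter
      fun y => ∀ j : Fin 2, linePoint y j ∈ A) with hL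
  set I := (((range (n+1)) ×ˢ (range (n+1))).filter (fun p : ℕ × ℕ => p.1 + p.2 ≤ n)) with hI
  set F : ℝ := (n.factorial : ℝ) with hF
  set K : ℝ := (((n+2).choose 2 : ℕ) : ℝ) with hK
  set D : ℝ := esDensity L with hD
  set dl : ℝ := esDensity A with hdl
  have hFpos : 0 < F := by
    rw [hF]; exact_mod_cast Nat.factorial_pos n
  have hKpos : 0 < K := by
    rw [hK]; exact_mod_cast Nat.choose_pos (by omega : 2 ≤ n + 2)
  -- key identity 1
  have key1 : ∑ π : Equiv.Perm (Fin n),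
      ((((range (n+1)).filter (fun u => (fun i => gpat2 n u (π.symm i)) ∈ A)).card : ℕ) : ℝ)
      = F * ((n:ℝ)+1) * dl := by
    rw [← Nat.cast_sum, sum2 A, Nat.cast_sum, hdl, esDensity, Finset.mul_sum]
    refine Finset.sum_congr rfl fun x hx => ?_
    rw [prod_fact2_real x]
    have hsp : slicePr 2 n x = (((n+1 : ℕ) : ℝ))⁻¹ * ((Nat.multinomial Finset.univ
        (fun j : Fin 2 => (Finset.univ.filter fun i => x i = j).card) : ℝ))⁻¹ := by
      rw [slicePr]
      norm_num
    rw [hsp, hF]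
    have h1ne : ((n+1 : ℕ) : ℝ) ≠ 0 := by positivity
    have hMne : ((Nat.multinomial Finset.univ
        (fun j : Fin 2 => (Finset.univ.filter fun i => x i = j).card) : ℕ) : ℝ) ≠ 0 := by
      exact_mod_cast (Nat.multinomial_pos (univ : Finset (Fin 2))
        (fun j : Fin 2 => (Finset.univ.filter fun i => x i = j).card)).ne'
    push_cast
    push_cast at h1ne
    field_simp
  -- key identity 2
  have key2 : ∑ π : Equiv.Perm (Fin n),
      (((I.filter (fun p => (fun i => gpat3 n p.1 p.2 (π.symm i)) ∈ L)).card : ℕ) : ℝ)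
      = F * K * D := by
    rw [← Nat.cast_sum, hI, sum3 L, Nat.cast_sum, hD, esDensity, Finset.mul_sum]
    refine Finset.sum_congr rfl fun y hy => ?_
    rw [prod_fact3_real y]
    have hsp : slicePr 3 n y = (((n+2).choose 2 : ℕ) : ℝ)⁻¹ * ((Nat.multinomial Finset.univ
        (fun j : Fin 3 => (Finset.univ.filter fun i => y i = j).card) : ℝ))⁻¹ := by
      rw [slicePr]
      norm_num
    rw [hsp, hF, hK]
    have hKne : (((n+2).choose 2 : ℕ) : ℝ) ≠ 0 := by
      exact_mod_cast (Nat.choose_pos (by omega : 2 ≤ n + 2)).ne'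
    have hMne : ((Nat.multinomial Finset.univ
        (fun j : Fin 3 => (Finset.univ.filter fun i => y i = j).card) : ℕ) : ℝ) ≠ 0 := by
      exact_mod_cast (Nat.multinomial_pos (univ : Finset (Fin 3))
        (fun j : Fin 3 => (Finset.univ.filter fun i => y i = j).card)).ne'
    field_simp
  -- key inequality per permutation
  have key3 : ∀ π : Equiv.Perm (Fin n),
      (((range (n+1)).filter (fun u => (fun i => gpat2 n u (π.symm i)) ∈ A)).card) ^ 2
        ≤ 2 * (I.filter (fun p => (fun i => gpat3 n p.1 p.2 (π.symm i)) ∈ L)).card := by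
    intro π
    set M := (range (n+1)).filter (fun u => (fun i => gpat2 n u (π.symm i)) ∈ A) with hM
    have hline : ∀ s w : ℕ, ((fun i => gpat3 n s w (π.symm i)) ∈ L) ↔
        ((fun i => gpat2 n (s+w) (π.symm i)) ∈ A ∧ (fun i => gpat2 n s (π.symm i)) ∈ A) := by
      intro s w
      rw [hL, mem_filter]
      have e0 : linePoint (fun i => gpat3 n s w (π.symm i)) 0
          = fun i => gpat2 n (s+w) (π.symm i) :=
        funext fun i => congrFun linePoint_gpat3_zero (π.symm i)
      have e1 : linePoint (fun i => gpat3 n s w (π.symm i)) 1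
          = fun i => gpat2 n s (π.symm i) :=
        funext fun i => congrFun linePoint_gpat3_one (π.symm i)
      rw [Fin.forall_fin_two, e0, e1]
      simp
    have tcard : (I.filter (fun p => (fun i => gpat3 n p.1 p.2 (π.symm i)) ∈ L)).card
        = ((M ×ˢ M).filter (fun q => q.1 ≤ q.2)).card := by
      apply Finset.card_nbij' (fun p => (p.1, p.1 + p.2)) (fun q => (q.1, q.2 - q.1))
      · intro p hp
        rw [mem_coe, mem_filter, hI, mem_filter, mem_product, mem_range, mem_range] at hp
        obtain ⟨⟨⟨h1, h2⟩, h3⟩, h4⟩ := hp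
        rw [hline] at h4
        simp only [mem_coe, mem_filter, mem_product, hM, mem_range]
        exact ⟨⟨⟨by omega, h4.2⟩, ⟨by omega, h4.1⟩⟩, by omega⟩
      · intro q hq
        simp only [mem_coe, mem_filter, mem_product, hM, mem_range] at hq
        obtain ⟨⟨⟨hq1, hq1A⟩, ⟨hq2, hq2A⟩⟩, hle⟩ := hq
        rw [mem_coe, mem_filter, hI, mem_filter, mem_product, mem_range, mem_range]
        dsimp only
        have heq : q.1 + (q.2 - q.1) = q.2 := by omega
        refine ⟨⟨⟨by omega, by omega⟩, by omega⟩, ?_⟩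
        rw [hline, heq]
        exact ⟨hq2A, hq1A⟩
      · intro p hp
        rw [mem_coe, mem_filter, hI, mem_filter] at hp
        have := hp.1.2
        ext <;> simp <;> omega
      · intro q hq
        simp only [mem_coe, mem_filter, mem_product] at hq
        have := hq.2
        ext <;> simp <;> omega
    rw [tcard]
    exact card_le_pairs M
  -- Cauchy–Schwarz over the permutation group
  have hcard : (#(univ : Finset (Equiv.Perm (Fin n))) : ℝ) = F := by
    rw [Finset.card_univ, Fintype.card_perm, Fintype.card_fin, hF]
  have cs := sq_sum_le_card_mul_sum_sq
    (s := (univ : Finset (Equiv.Perm (Fin n))))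
    (f := fun π => ((((range (n+1)).filter
      (fun u => (fun i => gpat2 n u (π.symm i)) ∈ A)).card : ℕ) : ℝ))
  rw [hcard] at cs
  have hchain : (F * ((n:ℝ)+1) * dl)^2 ≤ 2 * F * (F * K * D) := by
    calc (F * ((n:ℝ)+1) * dl)^2
        = (∑ π : Equiv.Perm (Fin n),
            ((((range (n+1)).filter (fun u => (fun i => gpat2 n u (π.symm i)) ∈ A)).card : ℕ) : ℝ))^2 := by
          rw [key1]
      _ ≤ F * ∑ π : Equiv.Perm (Fin n),
            ((((range (n+1)).filter (fun u => (fun i => gpat2 n u (π.symm i)) ∈ A)).card : ℕ) : ℝ)^2 := cs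
      _ ≤ F * ∑ π : Equiv.Perm (Fin n),
            (2 * (((I.filter (fun p => (fun i => gpat3 n p.1 p.2 (π.symm i)) ∈ L)).card : ℕ) : ℝ)) := by
          refine mul_le_mul_of_nonneg_left (Finset.sum_le_sum fun π _ => ?_) hFpos.le
          exact_mod_cast key3 π
      _ = 2 * F * ∑ π : Equiv.Perm (Fin n),
            (((I.filter (fun p => (fun i => gpat3 n p.1 p.2 (π.symm i)) ∈ L)).card : ℕ) : ℝ) := by
          rw [← Finset.mul_sum]; ring
      _ = 2 * F * (F * K * D) := by rw [key2]
  have h2K : ((n:ℝ)+2) * ((n:ℝ)+1) = 2 * K := by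
    have hnat : (n+2) * (n+1) = (n+2).choose 2 * 2 := by
      simpa [Nat.choose_one_right] using (Nat.add_one_mul_choose_eq (n+1) 1)
    have hnat2 : (n+2) * (n+1) = 2 * ((n+2).choose 2) := hnat.trans (Nat.mul_comm _ _)
    rw [hK]
    exact_mod_cast hnat2
  have hc : (((n:ℝ)+1))^2 * dl^2 ≤ 2 * K * D := by
    have hF2 : (0:ℝ) < F^2 := by positivity
    rw [← mul_le_mul_iff_right₀ hF2]
    calc F^2 * ((((n:ℝ)+1))^2 * dl^2) = (F * ((n:ℝ)+1) * dl)^2 := by ring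
      _ ≤ 2 * F * (F * K * D) := hchain
      _ = F^2 * (2 * K * D) := by ring
  rw [div_le_iff₀ (by positivity : (0:ℝ) < (n:ℝ)+2)]
  have hn1 : (0:ℝ) < (n:ℝ)+1 := by positivity
  have h3 : ((n:ℝ)+1) * (dl^2 * ((n:ℝ)+1)) ≤ ((n:ℝ)+1) * (D * ((n:ℝ)+2)) := by
    calc ((n:ℝ)+1) * (dl^2 * ((n:ℝ)+1)) = (((n:ℝ)+1))^2 * dl^2 := by ring
      _ ≤ 2 * K * D := hc
      _ = ((n:ℝ)+2) * ((n:ℝ)+1) * D := by rw [h2K]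
      _ = ((n:ℝ)+1) * (D * ((n:ℝ)+2)) := by ring
  exact le_of_mul_le_mul_left h3 hn1
end

section
/- Let x be a random point of [k]^n chosen according to the equal-slices measure. Then the probability that no coordinate of x is equal to k is exactly (k−1)/(n+k−1); in particular it is at most k/n. -/
open Finset

/-- The count vector of a string. -/
def esCnt {k n : ℕ} (x : Fin n → Fin k) : Fin k → ℕ :=
  fun j => (Finset.univ.filter fun i => x i = j).card

lemma esCnt_sum {k n : ℕ} (x : Fin n → Fin k) : ∑ j, esCnt x j = n := by
  classical
  have := Finset.card_eq_sum_card_fiberwise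
    (s := (Finset.univ : Finset (Fin n))) (t := (Finset.univ : Finset (Fin k)))
    (f := x) (fun i _ => Finset.mem_univ _)
  simpa [esCnt, Finset.card_univ] using this.symm

lemma esCnt_snoc {k n : ℕ} (y : Fin n → Fin k) (j m : Fin k) :
    esCnt (Fin.snoc y j) m = esCnt y m + if j = m then 1 else 0 := by
  classical
  simp only [esCnt, Finset.card_filter]
  rw [Fin.sum_univ_castSucc]
  simp [Fin.snoc_castSucc, Fin.snoc_last, eq_comm]

lemma esCnt_card_mul (k : ℕ) : ∀ (n : ℕ) (c : Fin k → ℕ), (∑ j, c j = n) →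
    ((Finset.univ : Finset (Fin n → Fin k)).filter fun x => esCnt x = c).card
      * ∏ j, Nat.factorial (c j) = Nat.factorial n := by
  intro n
  induction n with
  | zero =>
    intro c hc
    have hc0 : ∀ j, c j = 0 := fun j =>
      (Finset.sum_eq_zero_iff.mp hc) j (Finset.mem_univ j)
    have hfilter : ((Finset.univ : Finset (Fin 0 → Fin k)).filter fun x => esCnt x = c)
        = Finset.univ := by
      apply Finset.filter_true_of_mem
      intro x _
      funext j
      simp [esCnt, hc0 j]
    rw [hfilter]
    simp [hc0, Finset.card_univ]
  | succ n ih =>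
    intro c hc
    classical
    obtain ⟨S, hS⟩ : ∃ S, S = ((Finset.univ : Finset (Fin (n+1) → Fin k)).filter
        fun x => esCnt x = c) := ⟨_, rfl⟩
    have key : ∀ j : Fin k,
        (S.filter fun x => x (Fin.last n) = j).card * ∏ m, Nat.factorial (c m) = Nat.factorial n * c j := by
      intro j
      rcases Nat.eq_zero_or_pos (c j) with h0 | hpos
      · have : (S.filter fun x => x (Fin.last n) = j) = ∅ := by
          ext x
          simp only [hS, Finset.mem_filter, Finset.mem_univ, true_and,
            Finset.notMem_empty, iff_false, not_and]
          intro hx hlast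
          have hmem : Fin.last n ∈ Finset.univ.filter fun i => x i = j := by
            simp [hlast]
          have h1 : 0 < esCnt x j := Finset.card_pos.2 ⟨_, hmem⟩
          rw [hx] at h1
          omega
        simp [this, h0]
      · obtain ⟨c', hc'def⟩ : ∃ c', c' = Function.update c j (c j - 1) := ⟨_, rfl⟩
        have hc'j : c' j = c j - 1 := by rw [hc'def]; simp
        have hc'ne : ∀ m, m ≠ j → c' m = c m := fun m hm => by
          rw [hc'def]; exact Function.update_of_ne hm _ _
        have hc' : ∑ m, c' m = n := by
          have h1 : ∑ m, c' m = c' j + ∑ m ∈ Finset.univ.erase j, c' m :=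
            (Finset.add_sum_erase _ _ (Finset.mem_univ j)).symm
          have h2 : ∑ m, c m = c j + ∑ m ∈ Finset.univ.erase j, c m :=
            (Finset.add_sum_erase _ _ (Finset.mem_univ j)).symm
          have h3 : ∑ m ∈ Finset.univ.erase j, c' m = ∑ m ∈ Finset.univ.erase j, c m :=
            Finset.sum_congr rfl fun m hm => hc'ne m (Finset.ne_of_mem_erase hm)
          omega
        have hbij : (S.filter fun x => x (Fin.last n) = j).card
            = ((Finset.univ : Finset (Fin n → Fin k)).filter fun y => esCnt y = c').card := by
          refine Finset.card_bij' (fun x _ => Fin.init x) (fun y _ => Fin.snoc y j)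
            ?_ ?_ ?_ ?_
          · intro x hx
            simp only [hS, Finset.mem_filter, Finset.mem_univ, true_and] at hx ⊢
            obtain ⟨hcx, hlast⟩ := hx
            funext m
            have hsnoc := esCnt_snoc (Fin.init x) (x (Fin.last n)) m
            rw [Fin.snoc_init_self, hlast, hcx] at hsnoc
            by_cases hm : j = m
            · subst hm
              rw [if_pos rfl] at hsnoc
              rw [hc'j]
              omega
            · rw [hc'ne m (fun h => hm h.symm)]
              rw [if_neg hm] at hsnoc
              omega
          · intro y hy
            simp only [Finset.mem_filter, Finset.mem_univ, true_and] at hy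
            simp only [hS, Finset.mem_filter, Finset.mem_univ, true_and]
            constructor
            · funext m
              rw [esCnt_snoc, hy]
              by_cases hm : j = m
              · subst hm
                rw [if_pos rfl, hc'j]
                omega
              · rw [hc'ne m (fun h => hm h.symm), if_neg hm]
                omega
            · simp
          · intro x hx
            have hlast : x (Fin.last n) = j := (Finset.mem_filter.mp hx).2
            show Fin.snoc (Fin.init x) j = x
            rw [← hlast, Fin.snoc_init_self]
          · intro y hy
            simp
        have hprod : ∏ m, Nat.factorial (c m) = c j * ∏ m, Nat.factorial (c' m) := by
          have h1 : ∏ m, Nat.factorial (c' m)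
              = Nat.factorial (c' j) * ∏ m ∈ Finset.univ.erase j, Nat.factorial (c' m) :=
            (Finset.mul_prod_erase _ _ (Finset.mem_univ j)).symm
          have h1' : ∏ m ∈ Finset.univ.erase j, Nat.factorial (c' m)
              = ∏ m ∈ Finset.univ.erase j, Nat.factorial (c m) :=
            Finset.prod_congr rfl fun m hm => by rw [hc'ne m (Finset.ne_of_mem_erase hm)]
          have h2 : ∏ m, Nat.factorial (c m)
              = Nat.factorial (c j) * ∏ m ∈ Finset.univ.erase j, Nat.factorial (c m) :=
            (Finset.mul_prod_erase _ _ (Finset.mem_univ j)).symm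
          have h3 : Nat.factorial (c j) = c j * Nat.factorial (c' j) := by
            rw [hc'j]
            obtain ⟨p, hp⟩ : ∃ p, c j = p + 1 :=
              ⟨c j - 1, (Nat.succ_pred_eq_of_pos hpos).symm⟩
            rw [hp]
            simp [Nat.factorial_succ]
          rw [h2, h1, h1', h3]
          ring
        rw [hbij, hprod, ← mul_assoc, mul_comm _ (c j), mul_assoc, ih c' hc']
        ring
    have hsplit : S.card = ∑ j : Fin k, (S.filter fun x => x (Fin.last n) = j).card :=
      Finset.card_eq_sum_card_fiberwise (fun x _ => Finset.mem_univ _)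
    have htot : S.card * ∏ m, Nat.factorial (c m) = ∑ j, Nat.factorial n * c j := by
      rw [hsplit, Finset.sum_mul]
      exact Finset.sum_congr rfl fun j _ => key j
    rw [← hS, htot, ← Finset.mul_sum, hc, Nat.factorial_succ]
    ring

lemma esCnt_card {k n : ℕ} (c : Fin k → ℕ) (h : ∑ j, c j = n) :
    ((Finset.univ : Finset (Fin n → Fin k)).filter fun x => esCnt x = c).card
      = Nat.multinomial Finset.univ c := by
  have h1 := esCnt_card_mul k n c h
  have h2 := Nat.multinomial_spec Finset.univ c
  rw [h] at h2
  have hp : 0 < ∏ j, Nat.factorial (c j) := Finset.prod_pos fun _ _ => Nat.factorial_pos _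
  apply Nat.eq_of_mul_eq_mul_right hp
  rw [h1, ← h2]
  ring

lemma sum_count_univ {k : ℕ} (s : Multiset (Fin k)) :
    ∑ a, Multiset.count a s = Multiset.card s := by
  classical
  rw [← Multiset.toFinset_sum_count_eq]
  exact (Finset.sum_subset (Finset.subset_univ _) (fun x _ hx =>
    Multiset.count_eq_zero.2 (fun h => hx (Multiset.mem_toFinset.2 h)))).symm

/-- Stars and bars: counting the compositions. -/
lemma card_antidiagonalTuple_eq (k n : ℕ) :
    (Finset.Nat.antidiagonalTuple k n).card = (k + n - 1).choose n := by
  classical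
  have hcount : ∀ (f : Fin k → ℕ) (a : Fin k),
      Multiset.count a (∑ j, f j • ({j} : Multiset (Fin k))) = f a := by
    intro f a
    rw [Multiset.count_sum']
    simp only [Multiset.count_nsmul, Multiset.count_singleton]
    simp [eq_comm]
  have e : Sym (Fin k) n ≃ {c // c ∈ Finset.Nat.antidiagonalTuple k n} :=
    { toFun := fun m => ⟨fun j => Multiset.count j (m : Multiset (Fin k)), by
        rw [Finset.Nat.mem_antidiagonalTuple, sum_count_univ]
        exact m.2⟩
      invFun := fun c => ⟨∑ j, c.1 j • ({j} : Multiset (Fin k)), by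
        rw [← sum_count_univ]
        rw [Finset.sum_congr rfl (fun a _ => hcount c.1 a)]
        exact Finset.Nat.mem_antidiagonalTuple.mp c.2⟩
      left_inv := fun m => by
        apply Subtype.ext
        apply Multiset.ext.2
        intro a
        exact hcount _ a
      right_inv := fun c => by
        apply Subtype.ext
        funext j
        exact hcount c.1 j }
  calc (Finset.Nat.antidiagonalTuple k n).card
      = Fintype.card {c // c ∈ Finset.Nat.antidiagonalTuple k n} :=
        (Fintype.card_coe _).symm
    _ = Fintype.card (Sym (Fin k) n) := (Fintype.card_congr e).symm
    _ = (k + n - 1).choose n := by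
        rw [Sym.card_sym_eq_choose, Fintype.card_fin]

lemma sum_inv_multinomial (m n : ℕ) :
    ∑ y : Fin n → Fin m, ((Nat.multinomial Finset.univ (esCnt y) : ℝ))⁻¹
      = ((m + n - 1).choose n : ℝ) := by
  classical
  rw [← card_antidiagonalTuple_eq]
  rw [← Finset.sum_fiberwise_of_maps_to (g := esCnt)
    (fun y _ => Finset.Nat.mem_antidiagonalTuple.2 (esCnt_sum y))
    (fun y => ((Nat.multinomial Finset.univ (esCnt y) : ℝ))⁻¹)]
  rw [Finset.card_eq_sum_ones, Nat.cast_sum]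
  push_cast
  apply Finset.sum_congr rfl
  intro c hc
  have hsum : ∑ j, c j = n := Finset.Nat.mem_antidiagonalTuple.mp hc
  have hcard := esCnt_card c hsum
  have hpos : (0 : ℝ) < (Nat.multinomial Finset.univ c : ℝ) := by
    exact_mod_cast Nat.multinomial_pos _ _
  calc ∑ y ∈ Finset.univ.filter fun y : Fin n → Fin m => esCnt y = c,
        ((Nat.multinomial Finset.univ (esCnt y) : ℝ))⁻¹
      = ∑ y ∈ Finset.univ.filter fun y : Fin n → Fin m => esCnt y = c,
        ((Nat.multinomial Finset.univ c : ℝ))⁻¹ := by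
        apply Finset.sum_congr rfl
        intro y hy
        rw [(Finset.mem_filter.mp hy).2]
    _ = ((Finset.univ.filter fun y : Fin n → Fin m => esCnt y = c).card : ℝ)
          * ((Nat.multinomial Finset.univ c : ℝ))⁻¹ := by
        rw [Finset.sum_const, nsmul_eq_mul]
    _ = (1 : ℝ) := by
        rw [hcard]
        exact mul_inv_cancel₀ (ne_of_gt hpos)

lemma multinomial_castSucc_aux {K n : ℕ} (y : Fin n → Fin K) :
    Nat.multinomial (Finset.univ : Finset (Fin (K+1)))
        (esCnt (fun i => Fin.castSucc (y i)))
      = Nat.multinomial Finset.univ (esCnt y) := by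
  classical
  set x : Fin n → Fin (K+1) := fun i => Fin.castSucc (y i) with hx
  have h1 : ∀ j : Fin K, esCnt x (Fin.castSucc j) = esCnt y j := by
    intro j
    unfold esCnt
    congr 1
    apply Finset.filter_congr
    intro i _
    simp [hx, Fin.castSucc_inj]
  have h2 : esCnt x (Fin.last K) = 0 := by
    unfold esCnt
    rw [Finset.card_eq_zero, Finset.filter_eq_empty_iff]
    intro i _
    simp only [hx]
    exact ne_of_lt (Fin.castSucc_lt_last (y i))
  have hprodeq : ∏ j : Fin (K+1), Nat.factorial (esCnt x j) = ∏ j : Fin K, Nat.factorial (esCnt y j) := by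
    rw [Fin.prod_univ_castSucc]
    simp [h1, h2]
  have hs1 := Nat.multinomial_spec (Finset.univ : Finset (Fin (K+1))) (esCnt x)
  have hs2 := Nat.multinomial_spec (Finset.univ : Finset (Fin K)) (esCnt y)
  rw [esCnt_sum] at hs1 hs2
  have hp : 0 < ∏ j : Fin K, Nat.factorial (esCnt y j) := Finset.prod_pos fun _ _ => Nat.factorial_pos _
  apply Nat.eq_of_mul_eq_mul_left hp
  calc (∏ j : Fin K, Nat.factorial (esCnt y j)) * Nat.multinomial Finset.univ (esCnt x)
      = (∏ j : Fin (K+1), Nat.factorial (esCnt x j)) * Nat.multinomial Finset.univ (esCnt x) := by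
        rw [hprodeq]
    _ = Nat.factorial n := hs1
    _ = (∏ j : Fin K, Nat.factorial (esCnt y j)) * Nat.multinomial Finset.univ (esCnt y) := hs2.symm

lemma multinomial_castSucc {K n : ℕ} (x : Fin n → Fin (K+1)) (y : Fin n → Fin K)
    (hxy : ∀ i, x i = Fin.castSucc (y i)) :
    Nat.multinomial (Finset.univ : Finset (Fin (K+1))) (esCnt x)
      = Nat.multinomial Finset.univ (esCnt y) := by
  rw [show x = fun i => Fin.castSucc (y i) from funext hxy]
  exact multinomial_castSucc_aux y

/-- For an equal-slices random point of `[k]^n`, the probability that no coordinate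
equals `k` (the top value) is exactly `(k-1)/(n+k-1)`, and in particular at most `k/n`. -/
theorem equal_slices_degenerate_probability (k n : ℕ) (hk : 0 < k) (hn : 0 < n) :
    esDensity ((Finset.univ : Finset (Fin n → Fin k)).filter
        fun x => ∀ i, (x i : ℕ) ≠ k - 1) = ((k : ℝ) - 1) / ((n : ℝ) + k - 1) ∧
    esDensity ((Finset.univ : Finset (Fin n → Fin k)).filter
        fun x => ∀ i, (x i : ℕ) ≠ k - 1) ≤ (k : ℝ) / n := by
  classical
  obtain ⟨K, rfl⟩ : ∃ K, k = K + 1 := ⟨k - 1, by omega⟩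
  have hNnat : n + (K + 1) - 1 = n + K := by omega
  have hKnat : K + 1 - 1 = K := by omega
  set A := ((Finset.univ : Finset (Fin n → Fin (K+1))).filter
      fun x => ∀ i, (x i : ℕ) ≠ (K+1) - 1) with hA
  have hN0 : (0:ℝ) < ((n + K).choose K : ℝ) := by
    exact_mod_cast Nat.choose_pos (Nat.le_add_left K n)
  have stepA : esDensity A = ((n + K).choose K : ℝ)⁻¹ *
      ∑ x ∈ A, ((Nat.multinomial Finset.univ (esCnt x) : ℝ))⁻¹ := by
    rw [esDensity, Finset.mul_sum]
    apply Finset.sum_congr rfl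
    intro x _
    rw [slicePr, hNnat, hKnat]
    rfl
  have stepB : ∑ x ∈ A, ((Nat.multinomial Finset.univ (esCnt x) : ℝ))⁻¹
      = ∑ y : Fin n → Fin K, ((Nat.multinomial Finset.univ (esCnt y) : ℝ))⁻¹ := by
    refine Finset.sum_bij'
      (i := fun (x : Fin n → Fin (K+1)) (hx : x ∈ A) => fun i0 =>
        (⟨(x i0 : ℕ), by
          have h1 := (Finset.mem_filter.mp hx).2 i0
          have h2 := (x i0).isLt
          omega⟩ : Fin K))
      (j := fun (y : Fin n → Fin K) (_ : y ∈ Finset.univ) =>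
        fun i0 => Fin.castSucc (y i0)) ?_ ?_ ?_ ?_ ?_
    · intro x hx
      exact Finset.mem_univ _
    · intro y hy
      rw [hA, Finset.mem_filter]
      refine ⟨Finset.mem_univ _, fun i0 => ?_⟩
      have := (y i0).isLt
      simp only [Fin.coe_castSucc]
      omega
    · intro x hx
      funext i0
      exact Fin.ext (by simp)
    · intro y hy
      funext i0
      exact Fin.ext (by simp)
    · intro x hx
      rw [multinomial_castSucc x (fun i0 =>
        (⟨(x i0 : ℕ), by
          have h1 := (Finset.mem_filter.mp hx).2 i0
          have h2 := (x i0).isLt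
          omega⟩ : Fin K)) (fun i0 => Fin.ext (by simp))]
  have main : esDensity A = (K : ℝ) / ((n : ℝ) + K) := by
    rw [stepA, stepB, sum_inv_multinomial]
    rcases Nat.eq_zero_or_pos K with hK0 | hKpos
    · subst hK0
      have h0 : (0 + n - 1).choose n = 0 := Nat.choose_eq_zero_of_lt (by omega)
      rw [h0]
      simp
    · obtain ⟨L, rfl⟩ : ∃ L, K = L + 1 := ⟨K - 1, by omega⟩
      have hsymm : (L + 1 + n - 1).choose n = (n + L).choose L := by
        have h1 : L + 1 + n - 1 = n + L := by omega
        rw [h1]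
        have h2 := Nat.choose_symm (Nat.le_add_right n L)
        simpa using h2.symm
      rw [hsymm]
      have hid : (n + L + 1) * (n + L).choose L = (n + L + 1).choose (L + 1) * (L + 1) :=
        Nat.add_one_mul_choose_eq (n + L) L
      have hidR : ((n : ℝ) + L + 1) * ((n + L).choose L : ℝ)
          = ((n + (L + 1)).choose (L + 1) : ℝ) * ((L : ℝ) + 1) := by
        exact_mod_cast hid
      have hden : ((n + (L + 1)).choose (L + 1) : ℝ) ≠ 0 := ne_of_gt hN0
      have hne : ((n : ℝ) + (L + 1)) ≠ 0 := by positivity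
      push_cast
      field_simp
      linarith [hidR]
  constructor
  · rw [main]
    push_cast
    ring_nf
  · rw [main]
    rw [div_le_div_iff₀ (by positivity) (by exact_mod_cast hn)]
    push_cast
    have hK0 : (0:ℝ) ≤ (K:ℝ) := by positivity
    have hn0 : (0:ℝ) ≤ (n:ℝ) := by positivity
    nlinarith
end

section
/- Let x be chosen randomly from [k]^n according to the equal-slices measure, and let m be a positive integer. Then the probability that fewer than m coordinates of x are equal to k is at most mk/n. -/
open Finset

lemma fiber_card : ∀ (k : ℕ) (α : Type) [Fintype α] [DecidableEq α] (c : Fin k → ℕ),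
    (∑ j, c j = Fintype.card α) →
    (univ.filter fun x : α → Fin k => ∀ j, (univ.filter fun i => x i = j).card = c j).card
      = Nat.multinomial univ c := by
  intro k
  induction k with
  | zero =>
    intro α _ _ c h
    have hα : IsEmpty α := Fintype.card_eq_zero_iff.mp (by simpa using h.symm)
    rw [filter_true_of_mem (fun x _ => fun j => j.elim0)]
    simp [Nat.multinomial]
  | succ k ih =>
    intro α _ _ c h
    have key : ∀ s ∈ powersetCard (c (Fin.last k)) (univ : Finset α),
        ((univ.filter fun x : α → Fin (k+1) =>
            ∀ j, (univ.filter fun i => x i = j).card = c j).filter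
          (fun x => (univ.filter fun i => x i = Fin.last k) = s)).card
        = Nat.multinomial (univ : Finset (Fin k)) (fun j => c j.castSucc) := by
      intro s hs
      have hscard : s.card = c (Fin.last k) := mem_powersetCard_univ.mp hs
      have hsum' : (∑ j : Fin k, c j.castSucc) = Fintype.card {i : α // i ∉ s} := by
        have h2 := Fin.sum_univ_castSucc (f := c)
        have hle : s.card ≤ Fintype.card α := s.card_le_univ.trans_eq (by simp)
        have hcompl : Fintype.card {i : α // i ∉ s} = Fintype.card α - c (Fin.last k) := by
          rw [Fintype.card_subtype_compl, Fintype.card_coe, hscard]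
        omega
      rw [← ih {i : α // i ∉ s} (fun j => c j.castSucc) hsum']
      refine card_bij' (fun x hx => fun i : {i : α // i ∉ s} =>
        (x i.1).castPred (fun hlast => i.2
          ((Finset.ext_iff.mp (mem_filter.mp hx).2 i.1).mp
            (mem_filter.mpr ⟨mem_univ _, hlast⟩))))
        (fun y hy => fun i : α => if h : i ∈ s then Fin.last k else (y ⟨i, h⟩).castSucc)
        ?_ ?_ ?_ ?_
      · -- hi : forward maps into target
        intro x hx
        refine mem_filter.mpr ⟨mem_univ _, fun j => ?_⟩
        refine Eq.trans (card_bij (fun (i : {i : α // i ∉ s}) _ => i.1) ?_ ?_ ?_)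
          ((mem_filter.mp (mem_filter.mp hx).1).2 j.castSucc)
        · intro i hi
          simp only [mem_filter, mem_univ, true_and] at hi ⊢
          rw [← hi]
          exact (Fin.castSucc_castPred _ _).symm
        · intro i _ i' _ hh; exact Subtype.ext hh
        · intro i hi
          simp only [mem_filter, mem_univ, true_and] at hi
          have his : i ∉ s := by
            rw [← (mem_filter.mp hx).2]
            simp only [mem_filter, mem_univ, true_and, not_and]
            intro hlast
            rw [hi] at hlast
            exact absurd hlast (Fin.castSucc_lt_last j).ne
          refine ⟨⟨i, his⟩, ?_, rfl⟩
          simp only [mem_filter, mem_univ, true_and]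
          exact Fin.castPred_eq_iff_eq_castSucc .. |>.mpr hi
      · -- hj : backward maps into source
        intro y hy
        have hfib : (univ.filter fun i : α => (if h : i ∈ s then Fin.last k
            else ((y ⟨i, h⟩).castSucc : Fin (k+1))) = Fin.last k) = s := by
          ext i
          simp only [mem_filter, mem_univ, true_and]
          by_cases h : i ∈ s <;> simp [h, (Fin.castSucc_lt_last _).ne]
        refine mem_filter.mpr ⟨mem_filter.mpr ⟨mem_univ _, fun j => ?_⟩, hfib⟩
        refine Fin.lastCases ?_ (fun j' => ?_) j
        · rw [hfib, hscard]
        · rw [← (mem_filter.mp hy).2 j']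
          refine card_bij (fun (i : α) hi => (⟨i, fun hmem => ?_⟩ : {i : α // i ∉ s}))
            ?_ ?_ ?_
          · have hi2 := (mem_filter.mp hi).2
            simp only [dif_pos hmem] at hi2
            exact (Fin.castSucc_lt_last j').ne' hi2
          · intro i hi
            have hi2 := (mem_filter.mp hi).2
            simp only [mem_filter, mem_univ, true_and]
            have hns : i ∉ s := by
              intro hmem; simp only [dif_pos hmem] at hi2
              exact (Fin.castSucc_lt_last j').ne' hi2
            simp only [dif_neg hns] at hi2
            exact Fin.castSucc_injective _ hi2
          · intro i _ i' _ hh; exact congrArg Subtype.val hh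
          · intro i hi
            simp only [mem_filter, mem_univ, true_and] at hi
            refine ⟨i.1, ?_, Subtype.ext rfl⟩
            simp only [mem_filter, mem_univ, true_and]
            rw [dif_neg i.2, hi]
      · -- left inverse
        intro x hx
        funext i
        by_cases h : i ∈ s
        · simp only [dif_pos h]
          have h' := h
          rw [← (mem_filter.mp hx).2] at h'
          simpa using (mem_filter.mp h').2.symm
        · simp only [dif_neg h]
          exact Fin.castSucc_castPred _ _
      · -- right inverse
        intro y hy
        funext i
        refine (Fin.castPred_eq_iff_eq_castSucc ..).mpr ?_
        simp [dif_neg i.2]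
    have hmaps : ∀ x ∈ (univ.filter fun x : α → Fin (k+1) =>
        ∀ j, (univ.filter fun i => x i = j).card = c j),
        (univ.filter fun i => x i = Fin.last k) ∈ powersetCard (c (Fin.last k)) (univ : Finset α) := by
      intro x hx
      exact mem_powersetCard_univ.mpr ((mem_filter.mp hx).2 (Fin.last k))
    rw [card_eq_sum_card_fiberwise hmaps, Finset.sum_congr rfl key, sum_const,
      card_powersetCard, card_univ, smul_eq_mul]
    -- now show multinomial identity
    have huniv : (univ : Finset (Fin (k+1))) = insert (Fin.last k)
        ((univ : Finset (Fin k)).map Fin.castSuccEmb) := by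
      ext j
      refine ⟨fun _ => ?_, fun _ => mem_univ _⟩
      refine Fin.lastCases ?_ (fun i => ?_) j
      · exact mem_insert_self _ _
      · exact mem_insert_of_mem (mem_map_of_mem _ (mem_univ i))
    have hnotmem : Fin.last k ∉ (univ : Finset (Fin k)).map Fin.castSuccEmb := by
      intro hmem
      obtain ⟨i, -, hi⟩ := mem_map.mp hmem
      rw [Fin.coe_castSuccEmb] at hi
      exact (Fin.castSucc_lt_last i).ne hi
    rw [huniv, Nat.multinomial_insert hnotmem]
    congr 1
    · congr 1
      rw [Finset.sum_map]
      simp only [Fin.coe_castSuccEmb]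
      have h2 := Fin.sum_univ_castSucc (f := c)
      omega
    · unfold Nat.multinomial
      rw [Finset.sum_map, Finset.prod_map]
      simp only [Fin.coe_castSuccEmb]


lemma piAntidiag_card (K r : ℕ) :
    (Finset.piAntidiag (univ : Finset (Fin K)) r).card = (K + r - 1).choose r := by
  rw [← map_sym_eq_piAntidiag, Finset.card_map, Finset.sym_univ, card_univ,
    Sym.card_sym_eq_choose, Fintype.card_fin]

lemma fib_card (k' r a : ℕ) (har : a ≤ r) :
    ((Finset.piAntidiag (univ : Finset (Fin (k'+1))) r).filter
        fun c => c (Fin.last k') = a).card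
      = (Finset.piAntidiag (univ : Finset (Fin k')) (r - a)).card := by
  refine card_bij' (fun c _ => fun j : Fin k' => c j.castSucc)
    (fun d _ => Fin.snoc d a) ?_ ?_ ?_ ?_
  · intro c hc
    obtain ⟨hc1, hc2⟩ := mem_filter.mp hc
    rw [mem_piAntidiag] at hc1
    obtain ⟨hc1, -⟩ := hc1
    rw [mem_piAntidiag]
    refine ⟨?_, fun i _ => mem_univ i⟩
    have h2 := Fin.sum_univ_castSucc (f := c)
    have hc1' : ∑ i : Fin (k'+1), c i = r := hc1
    show ∑ j : Fin k', c j.castSucc = r - a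
    omega
  · intro d hd
    rw [mem_piAntidiag] at hd
    obtain ⟨hd1, -⟩ := hd
    refine mem_filter.mpr ⟨?_, by simp⟩
    rw [mem_piAntidiag]
    refine ⟨?_, fun i _ => mem_univ i⟩
    rw [Fin.sum_univ_castSucc]
    simp only [Fin.snoc_castSucc, Fin.snoc_last]
    have hd1' : ∑ i : Fin k', d i = r - a := hd1
    omega
  · intro c hc
    funext j
    refine Fin.lastCases ?_ (fun j' => ?_) j
    · simp only [Fin.snoc_last]
      exact ((mem_filter.mp hc).2).symm
    · simp only [Fin.snoc_castSucc]
  · intro d hd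
    funext j
    simp only [Fin.snoc_castSucc]

lemma choose_mono_aux (K : ℕ) (hK : 1 ≤ K) {r n : ℕ} (h : r ≤ n) :
    (K + r - 1).choose r ≤ (K + n - 1).choose n := by
  induction n, h using Nat.le_induction with
  | base => exact le_rfl
  | succ n hn ih =>
    refine ih.trans ?_
    have h1 : K + (n + 1) - 1 = (K + n - 1) + 1 := by omega
    have h2 : K + n = (K + n - 1) + 1 := by omega
    rw [h1, Nat.choose_succ_succ]
    exact Nat.le_add_right _ _

lemma ratio_bound (k' n r : ℕ) (hn : 0 < n) (hr : 0 < r) (hrn : r ≤ n) :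
    (k' + r - 1).choose r * n ≤ (k' + 1) * ((k' + n).choose n) := by
  rcases Nat.eq_zero_or_pos k' with rfl | hk'
  · rw [Nat.choose_eq_zero_of_lt (by omega)]
    simp
  · have hmono : (k' + r - 1).choose r ≤ (k' + n - 1).choose n := choose_mono_aux k' hk' hrn
    have h1 : (k' + n - 1).choose n = (k' + n - 1).choose (k' - 1) := by
      have := Nat.choose_symm (n := k' + n - 1) (k := n) (by omega)
      rw [← this]
      congr 1
      omega
    have h2 : (k' + n) * (k' + n - 1).choose (k' - 1) = (k' + n).choose k' * k' := by
      have h3 := Nat.add_one_mul_choose_eq (k' + n - 1) (k' - 1)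
      have h4 : k' + n - 1 + 1 = k' + n := by omega
      have h5 : k' - 1 + 1 = k' := by omega
      rw [h4, h5] at h3
      exact h3
    have h7 : (k' + n).choose k' = (k' + n).choose n := by
      have := Nat.choose_symm (n := k' + n) (k := n) (by omega)
      rw [← this]
      congr 1
      omega
    calc (k' + r - 1).choose r * n ≤ (k' + n - 1).choose (k' - 1) * (k' + n) := by
          rw [← h1]; exact Nat.mul_le_mul hmono (by omega)
      _ = (k' + n).choose k' * k' := by rw [← h2]; ring
      _ ≤ (k' + 1) * ((k' + n).choose n) := by rw [h7]; calc (k'+n).choose n * k' ≤ (k'+n).choose n * (k'+1) := Nat.mul_le_mul_left _ (by omega)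
            _ = (k'+1) * ((k'+n).choose n) := Nat.mul_comm _ _

lemma density_le (k' n m : ℕ) (hn : 0 < n) (hm : 0 < m) :
    esDensity ((univ : Finset (Fin n → Fin (k'+1))).filter
        fun x => (univ.filter fun i => x i = Fin.last k').card < m) ≤
      (m : ℝ) * ((k'+1 : ℕ) : ℝ) / n := by
  classical
  set f : (Fin n → Fin (k'+1)) → (Fin (k'+1) → ℕ) :=
    fun x => fun j => (univ.filter fun i => x i = j).card with hf
  set A : Finset (Fin n → Fin (k'+1)) :=
    (univ : Finset (Fin n → Fin (k'+1))).filter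
      fun x => (univ.filter fun i => x i = Fin.last k').card < m with hA
  set S : Finset (Fin (k'+1) → ℕ) :=
    (Finset.piAntidiag (univ : Finset (Fin (k'+1))) n).filter
      fun c => c (Fin.last k') < m with hS
  have hsumf : ∀ x : Fin n → Fin (k'+1), ∑ j, f x j = n := by
    intro x
    have h1 := card_eq_sum_card_fiberwise
      (f := x) (s := (univ : Finset (Fin n))) (t := (univ : Finset (Fin (k'+1))))
      (fun i _ => mem_univ (x i))
    rw [card_univ, Fintype.card_fin] at h1
    exact h1.symm
  have hmaps : ∀ x ∈ A, f x ∈ S := by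
    intro x hx
    refine mem_filter.mpr ⟨mem_piAntidiag.mpr ⟨hsumf x, fun i _ => mem_univ i⟩, ?_⟩
    exact (mem_filter.mp hx).2
  have hCpos : (0 : ℝ) < ((k'+n).choose n : ℝ) := by
    exact_mod_cast Nat.choose_pos (Nat.le_add_left n k')
  have hCeq : (n + (k'+1) - 1).choose ((k'+1) - 1) = (k'+n).choose n := by
    have h1 : n + (k'+1) - 1 = k' + n := by omega
    have h2 : (k'+1) - 1 = k' := by omega
    rw [h1, h2]
    have h3 := Nat.choose_symm (n := k' + n) (k := n) (Nat.le_add_left n k')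
    rw [show k' + n - n = k' from by omega] at h3
    exact h3
  -- the key density identity
  have hdensity : esDensity A = (S.card : ℝ) * (((k'+n).choose n : ℕ) : ℝ)⁻¹ := by
    unfold esDensity slicePr
    rw [hCeq]
    have hinner : ∀ c ∈ S,
        ∑ x ∈ A.filter (fun x => f x = c),
          (((k'+n).choose n : ℝ))⁻¹ * ((Nat.multinomial Finset.univ
            (fun j : Fin (k'+1) => (Finset.univ.filter fun i => x i = j).card) : ℝ))⁻¹
          = (((k'+n).choose n : ℝ))⁻¹ := by
      intro c hc
      have hfiber : A.filter (fun x => f x = c) =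
          univ.filter (fun x : Fin n → Fin (k'+1) =>
            ∀ j, (univ.filter fun i => x i = j).card = c j) := by
        rw [hA, filter_filter]
        refine filter_congr fun x _ => ?_
        constructor
        · rintro ⟨-, h2⟩
          intro j
          exact congrFun h2 j
        · intro h2
          refine ⟨?_, funext h2⟩
          rw [h2 (Fin.last k')]
          exact (mem_filter.mp hc).2
      have hcard : (A.filter (fun x => f x = c)).card = Nat.multinomial univ c := by
        rw [hfiber]
        refine fiber_card (k'+1) (Fin n) c ?_
        have hc1 := (mem_piAntidiag.mp (mem_filter.mp hc).1).1
        rw [Fintype.card_fin]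
        exact hc1
      have hmpos : ((Nat.multinomial (univ : Finset (Fin (k'+1))) c : ℕ) : ℝ) ≠ 0 :=
        Nat.cast_ne_zero.mpr (Nat.multinomial_pos _ _).ne'
      calc ∑ x ∈ A.filter (fun x => f x = c),
            (((k'+n).choose n : ℝ))⁻¹ * ((Nat.multinomial Finset.univ
              (fun j : Fin (k'+1) => (Finset.univ.filter fun i => x i = j).card) : ℝ))⁻¹
          = ∑ _x ∈ A.filter (fun x => f x = c),
            (((k'+n).choose n : ℝ))⁻¹ * ((Nat.multinomial Finset.univ c : ℝ))⁻¹ := by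
            refine sum_congr rfl fun x hx => ?_
            have hx2 : f x = c := (mem_filter.mp hx).2
            rw [hf] at hx2
            rw [show (fun j : Fin (k'+1) => (Finset.univ.filter fun i => x i = j).card) = c
              from hx2]
        _ = (((k'+n).choose n : ℝ))⁻¹ := by
            rw [sum_const, hcard, nsmul_eq_mul, ← mul_assoc, mul_comm
              ((Nat.multinomial univ c : ℕ) : ℝ), mul_assoc, mul_inv_cancel₀ hmpos, mul_one]
    calc ∑ x ∈ A, (((k'+n).choose n : ℝ))⁻¹ * ((Nat.multinomial Finset.univ
            (fun j : Fin (k'+1) => (Finset.univ.filter fun i => x i = j).card) : ℝ))⁻¹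
        = ∑ c ∈ S, ∑ x ∈ A.filter (fun x => f x = c),
            (((k'+n).choose n : ℝ))⁻¹ * ((Nat.multinomial Finset.univ
              (fun j : Fin (k'+1) => (Finset.univ.filter fun i => x i = j).card) : ℝ))⁻¹ :=
          (sum_fiberwise_of_maps_to hmaps _).symm
      _ = ∑ _c ∈ S, (((k'+n).choose n : ℝ))⁻¹ := sum_congr rfl hinner
      _ = (S.card : ℝ) * (((k'+n).choose n : ℕ) : ℝ)⁻¹ := by
          rw [sum_const, nsmul_eq_mul]
  -- the key natural number bound
  have hkey : S.card * n ≤ m * (k'+1) * ((k'+n).choose n) := by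
    rcases le_or_gt m n with hmn | hmn
    · have hsplit : S.card = ∑ a ∈ range m, (S.filter fun c => c (Fin.last k') = a).card :=
        card_eq_sum_card_fiberwise (fun c hc => mem_range.mpr (mem_filter.mp hc).2)
      have hper : ∀ a ∈ range m, (S.filter fun c => c (Fin.last k') = a).card * n
          ≤ (k'+1) * ((k'+n).choose n) := by
        intro a ha
        have ham : a < m := mem_range.mp ha
        have han : a < n := lt_of_lt_of_le ham hmn
        have hsub : (S.filter fun c => c (Fin.last k') = a).card ≤
            ((Finset.piAntidiag (univ : Finset (Fin (k'+1))) n).filter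
              fun c => c (Fin.last k') = a).card :=
          card_le_card (filter_subset_filter _ (filter_subset _ _))
        have heq : ((Finset.piAntidiag (univ : Finset (Fin (k'+1))) n).filter
              fun c => c (Fin.last k') = a).card = (k' + (n - a) - 1).choose (n - a) := by
          rw [fib_card k' n a (le_of_lt han), piAntidiag_card]
        calc (S.filter fun c => c (Fin.last k') = a).card * n
            ≤ (k' + (n - a) - 1).choose (n - a) * n := by
              rw [← heq]; exact Nat.mul_le_mul_right _ hsub
          _ ≤ (k'+1) * ((k'+n).choose n) :=
              ratio_bound k' n (n - a) hn (Nat.sub_pos_of_lt han) (Nat.sub_le n a)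
      calc S.card * n = ∑ a ∈ range m, (S.filter fun c => c (Fin.last k') = a).card * n := by
            rw [hsplit, sum_mul]
        _ ≤ ∑ _a ∈ range m, (k'+1) * ((k'+n).choose n) := sum_le_sum hper
        _ = m * ((k'+1) * ((k'+n).choose n)) := by rw [sum_const, card_range, smul_eq_mul]
        _ = m * (k'+1) * ((k'+n).choose n) := by ring
    · have hScard : S.card ≤ (k'+n).choose n := by
        have h1 : S.card ≤ (Finset.piAntidiag (univ : Finset (Fin (k'+1))) n).card :=
          card_le_card (filter_subset _ _)
        rw [piAntidiag_card] at h1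
        rw [show (k'+1) + n - 1 = k' + n from by omega] at h1
        have h3 := Nat.choose_symm (n := k' + n) (k := n) (Nat.le_add_left n k')
        rw [show k' + n - n = k' from by omega] at h3
        omega
      calc S.card * n ≤ ((k'+n).choose n) * m := Nat.mul_le_mul hScard (by omega)
        _ ≤ m * (k'+1) * ((k'+n).choose n) := by
            have : 1 ≤ k' + 1 := by omega
            calc ((k'+n).choose n) * m = m * 1 * ((k'+n).choose n) := by ring
              _ ≤ m * (k'+1) * ((k'+n).choose n) :=
                Nat.mul_le_mul_right _ (Nat.mul_le_mul_left _ this)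
  rw [hdensity, ← div_eq_mul_inv,
    div_le_div_iff₀ hCpos (by exact_mod_cast hn : (0:ℝ) < (n:ℝ))]
  calc (S.card : ℝ) * n ≤ ((m * (k'+1) * ((k'+n).choose n) : ℕ) : ℝ) := by
        exact_mod_cast hkey
    _ = (m : ℝ) * ((k'+1 : ℕ) : ℝ) * ((k'+n).choose n : ℝ) := by push_cast; ring

/-- For an equal-slices random point of `[k]^n`, the probability that fewer than
`m` coordinates equal `k` (the top value) is at most `mk/n`. -/
theorem equal_slices_few_top_coordinates (k n m : ℕ) (hk : 0 < k) (hn : 0 < n)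
    (hm : 0 < m) :
    esDensity ((Finset.univ : Finset (Fin n → Fin k)).filter
        fun x => (Finset.univ.filter fun i => (x i : ℕ) = k - 1).card < m) ≤
      (m : ℝ) * k / n := by
  obtain ⟨k', rfl⟩ : ∃ k', k = k' + 1 := ⟨k - 1, by omega⟩
  have hfilt : ((Finset.univ : Finset (Fin n → Fin (k'+1))).filter
      fun x => (Finset.univ.filter fun i => (x i : ℕ) = (k'+1) - 1).card < m)
      = ((univ : Finset (Fin n → Fin (k'+1))).filter
        fun x => (univ.filter fun i => x i = Fin.last k').card < m) := by
    refine filter_congr fun x _ => ?_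
    have heq : (Finset.univ.filter fun i : Fin n => (x i : ℕ) = (k'+1) - 1)
        = (univ.filter fun i => x i = Fin.last k') := by
      refine filter_congr fun i _ => ?_
      rw [Fin.ext_iff, Fin.val_last]
      omega
    rw [heq]
  rw [hfilt]
  exact density_le k' n m hn hm
end

section
/- For every δ > 0 there exists a positive integer N such that every subset A ⊆ [N]² with |A| ≥ δN² contains a corner, i.e. a triple of the form {(x, y), (x+d, y), (x, y+d)} with d > 0. -/
open Finset

/-- For a set `A ⊆ [1,N]²`, the sum over centers `c` of the size of the
"symmetric part" `A ∩ (c - A)` equals `|A|²`. -/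
private lemma sum_card_sym (N : ℕ) (A : Finset (ℕ × ℕ))
    (hA : A ⊆ Finset.Icc 1 N ×ˢ Finset.Icc 1 N) :
    ∑ c ∈ Finset.Icc 2 (2*N) ×ˢ Finset.Icc 2 (2*N),
      (A.filter (fun p => p.1 < c.1 ∧ p.2 < c.2 ∧ (c.1 - p.1, c.2 - p.2) ∈ A)).card
      = A.card ^ 2 := by
  classical
  have hmem : ∀ p ∈ A, 1 ≤ p.1 ∧ p.1 ≤ N ∧ 1 ≤ p.2 ∧ p.2 ≤ N := by
    intro p hp
    have := hA hp
    simp only [Finset.mem_product, Finset.mem_Icc] at this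
    tauto
  have key : (A ×ˢ A).card =
      ∑ c ∈ Finset.Icc 2 (2*N) ×ˢ Finset.Icc 2 (2*N),
        ((A ×ˢ A).filter
          (fun pq => (pq.1.1 + pq.2.1, pq.1.2 + pq.2.2) = c)).card := by
    apply Finset.card_eq_sum_card_fiberwise
    intro pq hpq
    rw [Finset.mem_coe, Finset.mem_product] at hpq
    obtain ⟨h1, h2⟩ := hpq
    obtain ⟨a1, _, a3, _⟩ := hmem _ h1
    obtain ⟨b1, _, b3, _⟩ := hmem _ h2
    obtain ⟨_, a2, _, a4⟩ := hmem _ h1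
    obtain ⟨_, b2, _, b4⟩ := hmem _ h2
    simp only [Finset.mem_coe, Finset.mem_product, Finset.mem_Icc]
    omega
  have fib : ∀ c : ℕ × ℕ,
      ((A ×ˢ A).filter (fun pq => (pq.1.1 + pq.2.1, pq.1.2 + pq.2.2) = c)).card
      = (A.filter (fun p => p.1 < c.1 ∧ p.2 < c.2 ∧ (c.1 - p.1, c.2 - p.2) ∈ A)).card := by
    intro c
    apply Finset.card_bij (fun pq _ => pq.1)
    · intro pq hpq
      simp only [Finset.mem_filter, Finset.mem_product] at hpq ⊢
      obtain ⟨⟨h1, h2⟩, heq⟩ := hpq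
      have heq1 : pq.1.1 + pq.2.1 = c.1 := by
        have := congrArg Prod.fst heq; simpa using this
      have heq2 : pq.1.2 + pq.2.2 = c.2 := by
        have := congrArg Prod.snd heq; simpa using this
      obtain ⟨hb1, _, hb2, _⟩ := hmem _ h2
      refine ⟨h1, by omega, by omega, ?_⟩
      have : (c.1 - pq.1.1, c.2 - pq.1.2) = pq.2 := by
        ext <;> simp <;> omega
      rw [this]; exact h2
    · intro pq hpq pq' hpq' hfst
      simp only [Finset.mem_filter, Finset.mem_product] at hpq hpq'
      obtain ⟨_, heq⟩ := hpq
      obtain ⟨_, heq'⟩ := hpq'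
      have e1 : pq.1.1 + pq.2.1 = c.1 := by have := congrArg Prod.fst heq; simpa using this
      have e2 : pq.1.2 + pq.2.2 = c.2 := by have := congrArg Prod.snd heq; simpa using this
      have e1' : pq'.1.1 + pq'.2.1 = c.1 := by have := congrArg Prod.fst heq'; simpa using this
      have e2' : pq'.1.2 + pq'.2.2 = c.2 := by have := congrArg Prod.snd heq'; simpa using this
      have hf1 : pq.1.1 = pq'.1.1 := by rw [hfst]
      have hf2 : pq.1.2 = pq'.1.2 := by rw [hfst]
      have : pq.2 = pq'.2 := by ext <;> omega
      exact Prod.ext hfst this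
    · intro p hp
      simp only [Finset.mem_filter] at hp
      obtain ⟨hpA, h1, h2, h3⟩ := hp
      refine ⟨(p, (c.1 - p.1, c.2 - p.2)), ?_, rfl⟩
      simp only [Finset.mem_filter, Finset.mem_product]
      refine ⟨⟨hpA, h3⟩, ?_⟩
      ext <;> simp <;> omega
  rw [Finset.card_product] at key
  rw [← Nat.pow_two] at key  -- A.card * A.card = A.card ^2
  rw [key]
  exact Finset.sum_congr rfl (fun c _ => (fib c).symm)

/-- The corners theorem of Ajtai and Szemerédi: for every `δ > 0` there exists `N`
such that every `A ⊆ [N]²` with `|A| ≥ δN²` contains a corner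
`{(x,y), (x+d,y), (x,y+d)}` with `d > 0`. -/
theorem ajtai_szemeredi_corners (δ : ℝ) (hδ : 0 < δ) :
    ∃ N : ℕ, 0 < N ∧ ∀ A : Finset (ℕ × ℕ),
      (A ⊆ Finset.Icc 1 N ×ˢ Finset.Icc 1 N) →
      δ * (N : ℝ) ^ 2 ≤ (A.card : ℝ) →
      ∃ x y d : ℕ, 0 < d ∧ (x, y) ∈ A ∧ (x + d, y) ∈ A ∧ (x, y + d) ∈ A := by
  classical
  obtain ⟨N, hN1, hnbound⟩ : ∃ N : ℕ, 1 ≤ N ∧ cornersTheoremBound (δ^2/16/9) ≤ N :=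
    ⟨max (cornersTheoremBound (δ^2/16/9)) 1, le_max_right _ _, le_max_left _ _⟩
  refine ⟨N, by omega, ?_⟩
  intro A hsub hcard
  -- find a popular center c
  have hsum := sum_card_sym N A hsub
  set C : Finset (ℕ × ℕ) := Finset.Icc 2 (2*N) ×ˢ Finset.Icc 2 (2*N) with hCdef
  have hCne : C.Nonempty := ⟨(2, 2), by simp [hCdef, Finset.mem_Icc]; omega⟩
  obtain ⟨c, hcC, hcmax⟩ := Finset.exists_max_image C
    (fun c => (A.filter (fun p => p.1 < c.1 ∧ p.2 < c.2 ∧ (c.1 - p.1, c.2 - p.2) ∈ A)).card) hCne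
  set B : Finset (ℕ × ℕ) :=
    A.filter (fun p => p.1 < c.1 ∧ p.2 < c.2 ∧ (c.1 - p.1, c.2 - p.2) ∈ A) with hBdef
  have hBA : B ⊆ A := Finset.filter_subset _ _
  have hpigeon : A.card ^ 2 ≤ C.card * B.card := by
    calc A.card ^ 2 = ∑ c' ∈ C, (A.filter (fun p => p.1 < c'.1 ∧ p.2 < c'.2 ∧
          (c'.1 - p.1, c'.2 - p.2) ∈ A)).card := hsum.symm
    _ ≤ ∑ _c' ∈ C, B.card := Finset.sum_le_sum (fun c' hc' => hcmax c' hc')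
    _ = C.card * B.card := by rw [Finset.sum_const, smul_eq_mul]
  have hCcard : C.card = (2*N - 1)^2 := by
    rw [hCdef, Finset.card_product, Nat.card_Icc]
    have : 2*N + 1 - 2 = 2*N - 1 := by omega
    rw [this, Nat.pow_two]
  -- density of B in real numbers
  have hBdense : δ^2/16 * ((N + 1 : ℕ) : ℝ) ^ 2 ≤ (B.card : ℝ) := by
    have h1 : (A.card : ℝ)^2 ≤ ((2*N - 1 : ℕ) : ℝ)^2 * (B.card : ℝ) := by
      rw [hCcard] at hpigeon
      exact_mod_cast hpigeon
    have hn1 : (1 : ℝ) ≤ (N : ℝ) := by exact_mod_cast hN1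
    have h2 : ((2*N - 1 : ℕ) : ℝ) ≤ 2 * (N : ℝ) := by
      have : (2*N - 1 : ℕ) ≤ 2*N := by omega
      calc ((2*N - 1 : ℕ) : ℝ) ≤ ((2*N : ℕ) : ℝ) := by exact_mod_cast this
      _ = 2 * (N : ℝ) := by push_cast; ring
    have h3 : ((2*N - 1 : ℕ) : ℝ)^2 ≤ (2 * (N:ℝ))^2 := by
      apply pow_le_pow_left₀ (by positivity) h2
    have hB0 : (0:ℝ) ≤ (B.card : ℝ) := by positivity
    have h4 : (A.card : ℝ)^2 ≤ (2*(N:ℝ))^2 * (B.card : ℝ) := by nlinarith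
    have h5 : (δ * (N:ℝ)^2)^2 ≤ (A.card : ℝ)^2 := by
      apply pow_le_pow_left₀ (by positivity) hcard
    have h6 : ((N + 1 : ℕ) : ℝ) ≤ 2 * (N : ℝ) := by push_cast; linarith
    have h7 : ((N + 1 : ℕ) : ℝ)^2 ≤ (2 * (N:ℝ))^2 := by
      apply pow_le_pow_left₀ (by positivity) h6
    have hNpos : (0:ℝ) < (N:ℝ) := lt_of_lt_of_le zero_lt_one hn1
    have key1 : δ^2 * (N:ℝ)^2 * (N:ℝ)^2 ≤ 4 * (B.card:ℝ) * (N:ℝ)^2 := by nlinarith [h4, h5]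
    have key2 : δ^2 * (N:ℝ)^2 ≤ 4 * (B.card:ℝ) :=
      le_of_mul_le_mul_right key1 (by positivity)
    have key3 : δ^2 * ((N + 1 : ℕ):ℝ)^2 ≤ δ^2 * (2*(N:ℝ))^2 :=
      mul_le_mul_of_nonneg_left h7 (sq_nonneg δ)
    nlinarith [key2, key3]
  -- B is inside range (N+1) × range (N+1)
  have hBsub : B ⊆ Finset.range (N+1) ×ˢ Finset.range (N+1) := by
    intro p hp
    have := hsub (hBA hp)
    simp only [Finset.mem_product, Finset.mem_Icc] at this
    simp only [Finset.mem_product, Finset.mem_range]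
    omega
  -- apply Mathlib's corners theorem to B
  have hnbound' : cornersTheoremBound (δ^2/16/9) ≤ N + 1 := by omega
  have hnotfree : ¬ IsCornerFree (B : Set (ℕ × ℕ)) :=
    corners_theorem_nat (by positivity) hnbound' B hBsub hBdense
  rw [IsCornerFree] at hnotfree
  push_neg at hnotfree
  obtain ⟨x₁, y₁, x₂, y₂, hcor, hne⟩ := hnotfree
  obtain ⟨m11, m12, m21, heq⟩ := hcor
  rw [Finset.mem_coe] at m11 m12 m21
  rcases Nat.lt_or_ge x₁ x₂ with hlt | hge
  · -- positive corner directly inside B ⊆ A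
    refine ⟨x₁, y₁, x₂ - x₁, by omega, hBA m11, ?_, ?_⟩
    · have hx : x₁ + (x₂ - x₁) = x₂ := by omega
      rw [hx]; exact hBA m21
    · have hy : y₁ + (x₂ - x₁) = y₂ := by omega
      rw [hy]; exact hBA m12
  · -- x₂ < x₁ : reflect through c to get a positive corner
    have hlt' : x₂ < x₁ := lt_of_le_of_ne hge (Ne.symm hne)
    simp only [hBdef, Finset.mem_filter] at m11 m12 m21
    obtain ⟨hA11, hc11a, hc11b, hp11⟩ := m11
    obtain ⟨hA12, hc12a, hc12b, hp12⟩ := m12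
    obtain ⟨hA21, hc21a, hc21b, hp21⟩ := m21
    refine ⟨c.1 - x₁, c.2 - y₁, x₁ - x₂, by omega, hp11, ?_, ?_⟩
    · have hx : c.1 - x₁ + (x₁ - x₂) = c.1 - x₂ := by omega
      rw [hx]; exact hp21
    · have hy : c.2 - y₁ + (x₁ - x₂) = c.2 - y₂ := by omega
      rw [hy]; exact hp12
end

section
/- Let η > 0, let k ≥ 2, and let m and n be positive integers with m ≤ n^{1/4} and n ≥ (12/η)^{12}. Choose uniformly at random a subset J ⊆ [n] of size m, a uniformly random y ∈ [k]^{[n]∖J}, and a uniformly random x ∈ [k−1]^J. Then the total variation distance between the distribution of the combined string (x, y) ∈ [k]^n and the uniform distribution on [k]^n is at most η. -/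
open Finset

namespace UniformRestrictedAux

variable {k m n : ℕ}

/-- The set of coordinates on which the `x`-part lands. -/
def Jset (e : (Fin m ⊕ Fin (n - m)) ≃ Fin n) : Finset (Fin n) :=
  Finset.univ.image fun a : Fin m => e (Sum.inl a)

lemma mem_Jset {e : (Fin m ⊕ Fin (n - m)) ≃ Fin n} {i : Fin n} :
    i ∈ Jset e ↔ ∃ a : Fin m, e (Sum.inl a) = i := by
  simp [Jset]

lemma card_Jset (e : (Fin m ⊕ Fin (n - m)) ≃ Fin n) : (Jset e).card = m := by
  rw [Jset, Finset.card_image_of_injective _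
    (fun a b hab => Sum.inl_injective (e.injective hab)), card_univ, Fintype.card_fin]

lemma card_low (k : ℕ) :
    (Finset.univ.filter fun v : Fin k => (v : ℕ) < k - 1).card = k - 1 := by
  have h : (Finset.univ.filter fun v : Fin k => (v : ℕ) < k - 1)
      = Finset.univ.image (Fin.castLE (Nat.sub_le k 1)) := by
    ext v
    simp only [mem_filter, mem_image, mem_univ, true_and]
    constructor
    · intro h; exact ⟨⟨(v : ℕ), h⟩, Fin.ext rfl⟩
    · rintro ⟨w, rfl⟩; simpa using w.isLt
  rw [h, Finset.card_image_of_injective _ (Fin.castLE_injective _), card_univ, Fintype.card_fin]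

lemma count_low (T : Finset (Fin n)) :
    ∑ z : Fin n → Fin k, (if ∀ i ∈ T, ((z i : ℕ) < k - 1) then (1 : ℝ) else 0)
      = ((k - 1 : ℕ) : ℝ) ^ T.card * (k : ℝ) ^ (n - T.card) := by
  rw [Finset.sum_boole]
  have h : Finset.univ.filter (fun z : Fin n → Fin k => ∀ i ∈ T, ((z i : ℕ) < k - 1))
      = Fintype.piFinset (fun i => if i ∈ T
          then (Finset.univ.filter fun v : Fin k => (v : ℕ) < k - 1) else Finset.univ) := by
    ext z
    simp only [mem_filter, mem_univ, true_and, Fintype.mem_piFinset]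
    constructor
    · intro h i
      by_cases hi : i ∈ T
      · simpa [hi] using h i hi
      · simp [hi]
    · intro h i hi
      have := h i
      rw [if_pos hi] at this
      simpa using this
  rw [h, Fintype.card_piFinset]
  have h2 : ∀ i : Fin n, (if i ∈ T
      then (Finset.univ.filter fun v : Fin k => (v : ℕ) < k - 1) else Finset.univ).card
      = if i ∈ T then k - 1 else k := by
    intro i; split <;> simp [card_low]
  rw [Finset.prod_congr rfl (fun i _ => h2 i)]
  push_cast
  rw [Finset.prod_ite, Finset.prod_const, Finset.prod_const]
  have h3 : Finset.univ.filter (fun i : Fin n => i ∈ T) = T := by ext i; simp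
  have h4 : Finset.univ.filter (fun i : Fin n => ¬ i ∈ T) = Tᶜ := by ext i; simp
  rw [h3, h4, Finset.card_compl, Fintype.card_fin]

def strFn (k : ℕ) (e : (Fin m ⊕ Fin (n - m)) ≃ Fin n)
    (x : Fin m → Fin (k - 1)) (y : Fin (n - m) → Fin k) : Fin n → Fin k :=
  fun i => Sum.elim (fun a => Fin.castLE (Nat.sub_le k 1) (x a)) y (e.symm i)

def strEquiv (e : (Fin m ⊕ Fin (n - m)) ≃ Fin n) :
    ((Fin m → Fin (k - 1)) × (Fin (n - m) → Fin k)) ≃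
      {z : Fin n → Fin k // ∀ a : Fin m, ((z (e (Sum.inl a)) : ℕ) < k - 1)} where
  toFun p := ⟨strFn k e p.1 p.2, fun a => by simpa [strFn] using (p.1 a).isLt⟩
  invFun zh := (fun a => ⟨(zh.1 (e (Sum.inl a)) : ℕ), zh.2 a⟩, fun b => zh.1 (e (Sum.inr b)))
  left_inv p := by
    refine Prod.ext ?_ ?_
    · funext a; apply Fin.ext; simp [strFn]
    · funext b; simp [strFn]
  right_inv zh := by
    apply Subtype.ext
    funext i
    rcases h : e.symm i with a | b
    · have hi : e (Sum.inl a) = i := by rw [← h, Equiv.apply_symm_apply]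
      apply Fin.ext
      simp [strFn, h, hi]
    · have hi : e (Sum.inr b) = i := by rw [← h, Equiv.apply_symm_apply]
      simp [strFn, h, hi]

lemma sum_str (e : (Fin m ⊕ Fin (n - m)) ≃ Fin n) (F : (Fin n → Fin k) → ℝ) :
    ∑ x : Fin m → Fin (k - 1), ∑ y : Fin (n - m) → Fin k, F (strFn k e x y)
      = ∑ z : Fin n → Fin k, if ∀ i ∈ Jset e, ((z i : ℕ) < k - 1) then F z else 0 := by
  classical
  have hiff : ∀ z : Fin n → Fin k,
      (∀ i ∈ Jset e, ((z i : ℕ) < k - 1)) ↔ (∀ a : Fin m, ((z (e (Sum.inl a)) : ℕ) < k - 1)) := by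
    intro z
    constructor
    · intro h a; exact h _ (mem_Jset.2 ⟨a, rfl⟩)
    · rintro h i hi; obtain ⟨a, rfl⟩ := mem_Jset.1 hi; exact h a
  calc ∑ x : Fin m → Fin (k - 1), ∑ y : Fin (n - m) → Fin k, F (strFn k e x y)
      = ∑ p : (Fin m → Fin (k - 1)) × (Fin (n - m) → Fin k), F (strFn k e p.1 p.2) :=
        (Fintype.sum_prod_type' (f := fun x y => F (strFn k e x y))).symm
    _ = ∑ zh : {z : Fin n → Fin k // ∀ a : Fin m, ((z (e (Sum.inl a)) : ℕ) < k - 1)},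
          F zh.1 := Fintype.sum_equiv (strEquiv e) _ _ (fun p => rfl)
    _ = ∑ z ∈ Finset.univ.filter
          (fun z : Fin n → Fin k => ∀ a : Fin m, ((z (e (Sum.inl a)) : ℕ) < k - 1)), F z :=
        (Finset.sum_subtype _ (by intro z; simp) (fun z => F z)).symm
    _ = ∑ z ∈ Finset.univ.filter
          (fun z : Fin n → Fin k => ∀ i ∈ Jset e, ((z i : ℕ) < k - 1)), F z := by
        apply Finset.sum_congr _ (fun z _ => rfl)
        ext z
        simp only [Finset.mem_filter, Finset.mem_univ, true_and]
        exact (hiff z).symm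
    _ = ∑ z : Fin n → Fin k, if ∀ i ∈ Jset e, ((z i : ℕ) < k - 1) then F z else 0 :=
        Finset.sum_filter _ _

def getA (hm : 0 < m) (e : (Fin m ⊕ Fin (n - m)) ≃ Fin n) (s : Fin n) : Fin m :=
  Sum.elim id (fun _ => ⟨0, hm⟩) (e.symm s)

lemma getA_spec (hm : 0 < m) {e : (Fin m ⊕ Fin (n - m)) ≃ Fin n} {s : Fin n}
    (hs : s ∈ Jset e) : e (Sum.inl (getA hm e s)) = s := by
  obtain ⟨a, ha⟩ := mem_Jset.1 hs
  have h : e.symm s = Sum.inl a := by rw [← ha, Equiv.symm_apply_apply]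
  rw [getA, h]
  simpa using ha

lemma count_step (hm : 0 < m) (s : Fin n) (S : Finset (Fin n)) (hs : s ∉ S) :
    n * (Finset.univ.filter
        fun e : (Fin m ⊕ Fin (n - m)) ≃ Fin n => insert s S ⊆ Jset e).card
      ≤ m * (Finset.univ.filter
        fun e : (Fin m ⊕ Fin (n - m)) ≃ Fin n => S ⊆ Jset e).card := by
  classical
  rw [show n * (Finset.univ.filter
        fun e : (Fin m ⊕ Fin (n - m)) ≃ Fin n => insert s S ⊆ Jset e).card
      = ((Finset.univ : Finset (Fin n)) ×ˢ (Finset.univ.filter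
        fun e : (Fin m ⊕ Fin (n - m)) ≃ Fin n => insert s S ⊆ Jset e)).card by
      rw [Finset.card_product, card_univ, Fintype.card_fin],
    show m * (Finset.univ.filter
        fun e : (Fin m ⊕ Fin (n - m)) ≃ Fin n => S ⊆ Jset e).card
      = ((Finset.univ : Finset (Fin m)) ×ˢ (Finset.univ.filter
        fun e : (Fin m ⊕ Fin (n - m)) ≃ Fin n => S ⊆ Jset e)).card by
      rw [Finset.card_product, card_univ, Fintype.card_fin]]
  apply Finset.card_le_card_of_injOn
    (fun p => (getA hm p.2 s, p.2.trans (Equiv.swap s p.1)))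
  · rintro ⟨t, e⟩ hp
    rw [Finset.mem_coe, Finset.mem_product, Finset.mem_filter] at hp
    rw [Finset.mem_coe, Finset.mem_product, Finset.mem_filter]
    obtain ⟨-, -, hp⟩ := hp
    refine ⟨mem_univ _, mem_univ _, ?_⟩
    intro u hu
    rw [mem_Jset]
    by_cases hut : u = t
    · refine ⟨getA hm e s, ?_⟩
      simp [Equiv.trans_apply, getA_spec hm (hp (mem_insert_self s S)), hut,
        Equiv.swap_apply_left]
    · obtain ⟨a, ha⟩ := mem_Jset.1 (hp (mem_insert_of_mem hu))
      refine ⟨a, ?_⟩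
      have hus : u ≠ s := fun h => hs (h ▸ hu)
      simp [Equiv.trans_apply, ha, Equiv.swap_apply_of_ne_of_ne hus hut]
  · rintro ⟨t₁, e₁⟩ h₁ ⟨t₂, e₂⟩ h₂ heq
    simp only [coe_product, Set.mem_prod, mem_coe, Finset.mem_filter] at h₁ h₂
    obtain ⟨hga, hee⟩ := Prod.ext_iff.1 heq
    simp only at hga hee
    have hs₁ : e₁ (Sum.inl (getA hm e₁ s)) = s := getA_spec hm (h₁.2.2 (mem_insert_self s S))
    have hs₂ : e₂ (Sum.inl (getA hm e₂ s)) = s := getA_spec hm (h₂.2.2 (mem_insert_self s S))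
    have c1 : (e₁.trans (Equiv.swap s t₁)) (Sum.inl (getA hm e₁ s)) = t₁ := by
      simp [Equiv.trans_apply, hs₁, Equiv.swap_apply_left]
    have c2 : (e₂.trans (Equiv.swap s t₂)) (Sum.inl (getA hm e₂ s)) = t₂ := by
      simp [Equiv.trans_apply, hs₂, Equiv.swap_apply_left]
    rw [hee, hga] at c1
    have ht : t₁ = t₂ := c1.symm.trans c2
    subst ht
    refine Prod.ext rfl ?_
    refine Equiv.ext fun x => ?_
    apply (Equiv.swap s t₁).injective
    have := congrFun (congrArg (fun (f : (Fin m ⊕ Fin (n - m)) ≃ Fin n) => (f : _ → _)) hee) x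
    simpa [Equiv.trans_apply] using this

lemma pow_one_add_le {x : ℝ} (hx : 0 ≤ x) :
    ∀ N : ℕ, 2 * (N * x) ≤ 1 → (1 + x) ^ N ≤ 1 + 2 * N * x := by
  intro N
  induction N with
  | zero => simp
  | succ N ih =>
    intro hN
    have hN' : 2 * (N * x) ≤ 1 := by
      push_cast at hN ⊢
      nlinarith
    have h1 : (1 + x) ^ N ≤ 1 + 2 * N * x := ih hN'
    have h2 : (0:ℝ) ≤ 1 + x := by linarith
    calc (1 + x) ^ (N + 1) = (1 + x) ^ N * (1 + x) := by ring
    _ ≤ (1 + 2 * N * x) * (1 + x) := by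
        apply mul_le_mul_of_nonneg_right h1 h2
    _ ≤ 1 + 2 * ((N:ℝ) + 1) * x := by push_cast at hN; nlinarith
    _ = 1 + 2 * ((N+1 : ℕ) : ℝ) * x := by push_cast; ring

lemma count_bound (hm : 0 < m) (hmn : m ≤ n) (S : Finset (Fin n)) :
    ((Finset.univ.filter
        fun e : (Fin m ⊕ Fin (n - m)) ≃ Fin n => S ⊆ Jset e).card : ℝ)
      ≤ ((m : ℝ) / n) ^ S.card
          * (Fintype.card ((Fin m ⊕ Fin (n - m)) ≃ Fin n) : ℝ) := by
  classical
  have hn0 : 0 < n := lt_of_lt_of_le hm hmn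
  have hn0' : (0:ℝ) < n := by exact_mod_cast hn0
  induction S using Finset.induction_on with
  | empty =>
    have h : (Finset.univ.filter
        fun e : (Fin m ⊕ Fin (n - m)) ≃ Fin n => (∅ : Finset (Fin n)) ⊆ Jset e)
        = Finset.univ := by
      apply Finset.filter_true_of_mem
      intro e _
      exact Finset.empty_subset _
    rw [h]
    simp [Finset.card_univ]
  | @insert s S hs ih =>
    have key := count_step hm s S hs
    have key' : ((n:ℝ)) * ((Finset.univ.filter
        fun e : (Fin m ⊕ Fin (n - m)) ≃ Fin n => insert s S ⊆ Jset e).card : ℝ)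
        ≤ (m : ℝ) * ((Finset.univ.filter
        fun e : (Fin m ⊕ Fin (n - m)) ≃ Fin n => S ⊆ Jset e).card : ℝ) := by
      exact_mod_cast key
    have h1 : ((Finset.univ.filter
        fun e : (Fin m ⊕ Fin (n - m)) ≃ Fin n => insert s S ⊆ Jset e).card : ℝ)
        ≤ ((m : ℝ) / n) * ((Finset.univ.filter
        fun e : (Fin m ⊕ Fin (n - m)) ≃ Fin n => S ⊆ Jset e).card : ℝ) := by
      rw [div_mul_eq_mul_div, le_div_iff₀ hn0']
      linarith
    calc ((Finset.univ.filter
        fun e : (Fin m ⊕ Fin (n - m)) ≃ Fin n => insert s S ⊆ Jset e).card : ℝ)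
        ≤ ((m : ℝ) / n) * ((Finset.univ.filter
          fun e : (Fin m ⊕ Fin (n - m)) ≃ Fin n => S ⊆ Jset e).card : ℝ) := h1
      _ ≤ ((m : ℝ) / n) * (((m : ℝ) / n) ^ S.card
          * (Fintype.card ((Fin m ⊕ Fin (n - m)) ≃ Fin n) : ℝ)) := by
          apply mul_le_mul_of_nonneg_left ih (by positivity)
      _ = ((m : ℝ) / n) ^ (insert s S).card
          * (Fintype.card ((Fin m ⊕ Fin (n - m)) ≃ Fin n) : ℝ) := by
          rw [Finset.card_insert_of_notMem hs, pow_succ]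
          ring

lemma pow_card_eq_sum_powerset (r : ℝ) (T : Finset (Fin n)) :
    (r + 1) ^ T.card = ∑ S ∈ T.powerset, r ^ S.card := by
  have h := Finset.prod_add (fun _ : Fin n => r) (fun _ : Fin n => (1:ℝ)) T
  simpa [Finset.prod_const] using h

lemma sum_powerset_ite (T : Finset (Fin n)) (f : Finset (Fin n) → ℝ) :
    ∑ S ∈ T.powerset, f S
      = ∑ S ∈ (Finset.univ : Finset (Fin n)).powerset, if S ⊆ T then f S else 0 := by
  rw [Finset.sum_ite, Finset.sum_const, smul_zero, add_zero]
  apply Finset.sum_congr _ (fun S _ => rfl)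
  ext S
  simp [Finset.mem_powerset]

lemma nonempty_E (hmn : m ≤ n) : Nonempty ((Fin m ⊕ Fin (n - m)) ≃ Fin n) :=
  ⟨finSumFinEquiv.trans (finCongr (Nat.add_sub_cancel' hmn))⟩

/-- The indicator that `z` avoids the top value on all of `Jset e`. -/
def indF (k : ℕ) {m n : ℕ} (e : (Fin m ⊕ Fin (n - m)) ≃ Fin n) (z : Fin n → Fin k) : ℝ :=
  if ∀ i ∈ Jset e, ((z i : ℕ) < k - 1) then 1 else 0

/-- The density of the "restricted coordinates" distribution. -/
noncomputable def pfun (k m n : ℕ) (z : Fin n → Fin k) : ℝ :=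
  ((Fintype.card ((Fin m ⊕ Fin (n - m)) ≃ Fin n)) : ℝ)⁻¹ *
    ∑ e : (Fin m ⊕ Fin (n - m)) ≃ Fin n,
      (((((k - 1 : ℕ)) : ℝ) ^ m)⁻¹ * ((k : ℝ) ^ (n - m))⁻¹) * indF k e z

lemma indF_nonneg (e : (Fin m ⊕ Fin (n - m)) ≃ Fin n) (z : Fin n → Fin k) :
    0 ≤ indF k e z := by
  rw [indF]; split <;> norm_num

lemma sum_indF (e : (Fin m ⊕ Fin (n - m)) ≃ Fin n) :
    ∑ z : Fin n → Fin k, indF k e z = ((k - 1 : ℕ) : ℝ) ^ m * (k : ℝ) ^ (n - m) := by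
  unfold indF
  rw [count_low (Jset e), card_Jset]

lemma pfun_nonneg (z : Fin n → Fin k) : 0 ≤ pfun k m n z := by
  rw [pfun]
  apply mul_nonneg (by positivity)
  apply Finset.sum_nonneg
  intro e _
  exact mul_nonneg (by positivity) (indF_nonneg e z)

lemma sum_pfun (hk : 2 ≤ k) (hmn : m ≤ n) :
    ∑ z : Fin n → Fin k, pfun k m n z = 1 := by
  have hk1 : 1 ≤ k - 1 := by omega
  have hd0 : (0:ℝ) < ((k - 1 : ℕ) : ℝ) := by exact_mod_cast hk1
  have hk0 : (0:ℝ) < (k : ℝ) := by positivity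
  have hN : Nonempty ((Fin m ⊕ Fin (n - m)) ≃ Fin n) := nonempty_E hmn
  have hN0 : (0:ℝ) < ((Fintype.card ((Fin m ⊕ Fin (n - m)) ≃ Fin n)) : ℝ) := by
    exact_mod_cast Fintype.card_pos
  unfold pfun
  rw [← Finset.mul_sum, Finset.sum_comm]
  have h1 : ∀ e : (Fin m ⊕ Fin (n - m)) ≃ Fin n,
      ∑ z : Fin n → Fin k,
        (((((k - 1 : ℕ)) : ℝ) ^ m)⁻¹ * ((k : ℝ) ^ (n - m))⁻¹) * indF k e z = 1 := by
    intro e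
    rw [← Finset.mul_sum, sum_indF e]
    field_simp
  rw [Finset.sum_congr rfl (fun e _ => h1 e), Finset.sum_const, card_univ, nsmul_eq_mul,
    mul_one]
  exact inv_mul_cancel₀ (ne_of_gt hN0)

lemma pow_arith {x y : ℝ} (hx : x ≠ 0) (hy : y ≠ 0) {mm nn t j : ℕ}
    (htj : t + j = mm + mm) (htn : t ≤ nn) (hmn' : mm ≤ nn) :
    x ^ nn * (((y ^ mm)⁻¹ * (x ^ (nn - mm))⁻¹) * ((y ^ mm)⁻¹ * (x ^ (nn - mm))⁻¹)
        * (y ^ t * x ^ (nn - t)))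
      = x ^ j * (y ^ j)⁻¹ := by
  have key : x ^ nn * (y ^ t * x ^ (nn - t)) * y ^ j
      = x ^ j * ((y ^ mm * x ^ (nn - mm)) * (y ^ mm * x ^ (nn - mm))) := by
    calc x ^ nn * (y ^ t * x ^ (nn - t)) * y ^ j
        = (x ^ nn * x ^ (nn - t)) * (y ^ t * y ^ j) := by ring
      _ = x ^ (nn + (nn - t)) * y ^ (t + j) := by rw [← pow_add, ← pow_add]
      _ = x ^ (j + ((nn - mm) + (nn - mm))) * y ^ (mm + mm) := by
          rw [show nn + (nn - t) = j + ((nn - mm) + (nn - mm)) by omega, htj]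
      _ = (x ^ j * (x ^ (nn - mm) * x ^ (nn - mm))) * (y ^ mm * y ^ mm) := by
          simp only [pow_add]
      _ = x ^ j * ((y ^ mm * x ^ (nn - mm)) * (y ^ mm * x ^ (nn - mm))) := by ring
  have hxm : x ^ (nn - mm) ≠ 0 := pow_ne_zero _ hx
  have hym : y ^ mm ≠ 0 := pow_ne_zero _ hy
  have hyj : y ^ j ≠ 0 := pow_ne_zero _ hy
  field_simp
  linear_combination key

lemma second_moment (hk : 2 ≤ k) (hm : 0 < m) (hmn : m ≤ n) :
    (k : ℝ) ^ n * ∑ z : Fin n → Fin k, (pfun k m n z) ^ 2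
      ≤ (1 + (((k - 1 : ℕ) : ℝ))⁻¹ * ((m : ℝ) / n) ^ 2) ^ n := by
  classical
  have hn0 : 0 < n := lt_of_lt_of_le hm hmn
  have hk1 : 1 ≤ k - 1 := by omega
  have hd0 : (0:ℝ) < ((k - 1 : ℕ) : ℝ) := by exact_mod_cast hk1
  have hk0 : (0:ℝ) < (k : ℝ) := by
    have : 0 < k := by omega
    exact_mod_cast this
  have hNne : Nonempty ((Fin m ⊕ Fin (n - m)) ≃ Fin n) := nonempty_E hmn
  simp only [pfun]
  set N : ℝ := ((Fintype.card ((Fin m ⊕ Fin (n - m)) ≃ Fin n)) : ℝ) with hN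
  have hN0 : (0:ℝ) < N := by rw [hN]; exact_mod_cast Fintype.card_pos
  set ci : ℝ := ((((k - 1 : ℕ)) : ℝ) ^ m)⁻¹ * ((k : ℝ) ^ (n - m))⁻¹ with hci
  set r : ℝ := (((k - 1 : ℕ) : ℝ))⁻¹ with hr
  have hr0 : 0 ≤ r := le_of_lt (by rw [hr]; exact inv_pos.2 hd0)
  -- Step 1: expand the square
  have h1 : ∀ z : Fin n → Fin k,
      (N⁻¹ * ∑ e : (Fin m ⊕ Fin (n - m)) ≃ Fin n, ci * indF k e z) ^ 2
        = (N⁻¹ * N⁻¹) * ∑ e : (Fin m ⊕ Fin (n - m)) ≃ Fin n,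
            ∑ e' : (Fin m ⊕ Fin (n - m)) ≃ Fin n,
              (ci * ci) * (indF k e z * indF k e' z) := by
    intro z
    calc (N⁻¹ * ∑ e : (Fin m ⊕ Fin (n - m)) ≃ Fin n, ci * indF k e z) ^ 2
        = (N⁻¹ * N⁻¹) * ((∑ e : (Fin m ⊕ Fin (n - m)) ≃ Fin n, ci * indF k e z)
            * (∑ e' : (Fin m ⊕ Fin (n - m)) ≃ Fin n, ci * indF k e' z)) := by ring
      _ = (N⁻¹ * N⁻¹) * ∑ e : (Fin m ⊕ Fin (n - m)) ≃ Fin n,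
            ∑ e' : (Fin m ⊕ Fin (n - m)) ≃ Fin n,
              (ci * indF k e z) * (ci * indF k e' z) := by rw [Finset.sum_mul_sum]
      _ = _ := by
          congr 1
          refine Finset.sum_congr rfl fun e _ => ?_
          refine Finset.sum_congr rfl fun e' _ => ?_
          ring
  have h2 : ∑ z : Fin n → Fin k,
      (N⁻¹ * ∑ e : (Fin m ⊕ Fin (n - m)) ≃ Fin n, ci * indF k e z) ^ 2
        = (N⁻¹ * N⁻¹) * ∑ e : (Fin m ⊕ Fin (n - m)) ≃ Fin n,
            ∑ e' : (Fin m ⊕ Fin (n - m)) ≃ Fin n,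
              (ci * ci) * ∑ z : Fin n → Fin k, indF k e z * indF k e' z := by
    rw [Finset.sum_congr rfl (fun z _ => h1 z), ← Finset.mul_sum]
    congr 1
    rw [Finset.sum_comm]
    refine Finset.sum_congr rfl fun e _ => ?_
    rw [Finset.sum_comm]
    refine Finset.sum_congr rfl fun e' _ => ?_
    rw [Finset.mul_sum]
  -- Step 2: count pairs
  have hpair : ∀ e e' : (Fin m ⊕ Fin (n - m)) ≃ Fin n,
      ∑ z : Fin n → Fin k, indF k e z * indF k e' z
        = ((k - 1 : ℕ) : ℝ) ^ ((Jset e ∪ Jset e').card)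
            * (k : ℝ) ^ (n - (Jset e ∪ Jset e').card) := by
    intro e e'
    have hz : ∀ z : Fin n → Fin k, indF k e z * indF k e' z
        = if ∀ i ∈ Jset e ∪ Jset e', ((z i : ℕ) < k - 1) then (1:ℝ) else 0 := by
      intro z
      unfold indF
      have hcond := Finset.forall_mem_union (s := Jset e) (t := Jset e')
        (p := fun i => ((z i : ℕ) < k - 1))
      rw [if_congr hcond rfl rfl]
      by_cases hP : ∀ i ∈ Jset e, ((z i : ℕ) < k - 1)
      · by_cases hQ : ∀ i ∈ Jset e', ((z i : ℕ) < k - 1)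
        · rw [if_pos hP, if_pos hQ, if_pos ⟨hP, hQ⟩]; norm_num
        · rw [if_pos hP, if_neg hQ, if_neg (show ¬((∀ i ∈ Jset e, ((z i : ℕ) < k - 1))
            ∧ ∀ i ∈ Jset e', ((z i : ℕ) < k - 1)) from fun h => hQ h.2)]
          norm_num
      · rw [if_neg hP, if_neg (show ¬((∀ i ∈ Jset e, ((z i : ℕ) < k - 1))
            ∧ ∀ i ∈ Jset e', ((z i : ℕ) < k - 1)) from fun h => hP h.1)]
        norm_num
    rw [Finset.sum_congr rfl (fun z _ => hz z)]
    exact count_low _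
  -- Step 3: per-pair identity
  have hkey : ∀ e e' : (Fin m ⊕ Fin (n - m)) ≃ Fin n,
      (k:ℝ)^n * ((ci * ci) * ∑ z : Fin n → Fin k, indF k e z * indF k e' z)
        = (1 + r) ^ ((Jset e ∩ Jset e').card) := by
    intro e e'
    rw [hpair e e']
    have htj : (Jset e ∪ Jset e').card + (Jset e ∩ Jset e').card = m + m := by
      rw [Finset.card_union_add_card_inter, card_Jset, card_Jset]
    have htn : (Jset e ∪ Jset e').card ≤ n :=
      le_trans (Finset.card_le_univ _) (by simp)
    have h1r : 1 + r = (k:ℝ) * (((k - 1 : ℕ) : ℝ))⁻¹ := by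
      rw [hr]
      have hd : ((k - 1 : ℕ) : ℝ) = (k:ℝ) - 1 := by
        push_cast [Nat.cast_sub (show 1 ≤ k by omega)]; ring
      rw [hd]
      have : (k:ℝ) - 1 ≠ 0 := by rw [← hd]; exact ne_of_gt hd0
      field_simp
      ring
    rw [h1r, mul_pow, inv_pow, hci]
    exact pow_arith (ne_of_gt hk0) (ne_of_gt hd0) htj htn hmn
  -- Step 4: put together, expand over subsets
  have h3 : (k:ℝ)^n * ∑ z : Fin n → Fin k,
      (N⁻¹ * ∑ e : (Fin m ⊕ Fin (n - m)) ≃ Fin n, ci * indF k e z) ^ 2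
        = (N⁻¹ * N⁻¹) * ∑ e : (Fin m ⊕ Fin (n - m)) ≃ Fin n,
            ∑ e' : (Fin m ⊕ Fin (n - m)) ≃ Fin n,
              (1 + r) ^ ((Jset e ∩ Jset e').card) := by
    rw [h2, mul_left_comm]
    congr 1
    rw [Finset.mul_sum]
    refine Finset.sum_congr rfl fun e _ => ?_
    rw [Finset.mul_sum]
    exact Finset.sum_congr rfl fun e' _ => hkey e e'
  set x : ℝ := r * ((m:ℝ)/n)^2 with hxdef
  have hx0 : 0 ≤ x := mul_nonneg hr0 (sq_nonneg _)
  have hfact : ∀ (S : Finset (Fin n)) (e e' : (Fin m ⊕ Fin (n - m)) ≃ Fin n),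
      (if S ⊆ Jset e ∩ Jset e' then r ^ S.card else 0)
        = r ^ S.card * ((if S ⊆ Jset e then (1:ℝ) else 0)
            * (if S ⊆ Jset e' then (1:ℝ) else 0)) := by
    intro S e e'
    by_cases h1' : S ⊆ Jset e <;> by_cases h2' : S ⊆ Jset e' <;>
      simp [Finset.subset_inter_iff, h1', h2']
  have hexp : ∀ e e' : (Fin m ⊕ Fin (n - m)) ≃ Fin n,
      (1 + r) ^ ((Jset e ∩ Jset e').card)
        = ∑ S ∈ (Finset.univ : Finset (Fin n)).powerset,
            r ^ S.card * ((if S ⊆ Jset e then (1:ℝ) else 0)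
              * (if S ⊆ Jset e' then (1:ℝ) else 0)) := by
    intro e e'
    rw [add_comm 1 r, pow_card_eq_sum_powerset,
      sum_powerset_ite (Jset e ∩ Jset e') (fun S => r ^ S.card)]
    exact Finset.sum_congr rfl fun S _ => hfact S e e'
  have h4 : ∑ e : (Fin m ⊕ Fin (n - m)) ≃ Fin n,
      ∑ e' : (Fin m ⊕ Fin (n - m)) ≃ Fin n, (1 + r) ^ ((Jset e ∩ Jset e').card)
        = ∑ S ∈ (Finset.univ : Finset (Fin n)).powerset,
            r ^ S.card * ((∑ e : (Fin m ⊕ Fin (n - m)) ≃ Fin n,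
                (if S ⊆ Jset e then (1:ℝ) else 0))
              * (∑ e' : (Fin m ⊕ Fin (n - m)) ≃ Fin n,
                (if S ⊆ Jset e' then (1:ℝ) else 0))) := by
    rw [Finset.sum_congr rfl (fun e _ => Finset.sum_congr rfl (fun e' _ => hexp e e'))]
    rw [Finset.sum_congr rfl (fun e (_ : e ∈ Finset.univ) => Finset.sum_comm), Finset.sum_comm]
    refine Finset.sum_congr rfl fun S _ => ?_
    rw [Finset.sum_mul_sum]
    simp only [Finset.mul_sum]
  have h5 : ∀ S ∈ (Finset.univ : Finset (Fin n)).powerset,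
      r ^ S.card * ((∑ e : (Fin m ⊕ Fin (n - m)) ≃ Fin n,
          (if S ⊆ Jset e then (1:ℝ) else 0))
        * (∑ e' : (Fin m ⊕ Fin (n - m)) ≃ Fin n,
          (if S ⊆ Jset e' then (1:ℝ) else 0)))
        ≤ x ^ S.card * (N * N) := by
    intro S _
    have hcS : (∑ e : (Fin m ⊕ Fin (n - m)) ≃ Fin n,
        (if S ⊆ Jset e then (1:ℝ) else 0))
        = ((Finset.univ.filter
            fun e : (Fin m ⊕ Fin (n - m)) ≃ Fin n => S ⊆ Jset e).card : ℝ) := by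
      rw [Finset.sum_boole]
    have hb := count_bound hm hmn S
    rw [hcS]
    have hc0 : (0:ℝ) ≤ ((Finset.univ.filter
        fun e : (Fin m ⊕ Fin (n - m)) ≃ Fin n => S ⊆ Jset e).card : ℝ) :=
      Nat.cast_nonneg _
    calc r ^ S.card * (((Finset.univ.filter
          fun e : (Fin m ⊕ Fin (n - m)) ≃ Fin n => S ⊆ Jset e).card : ℝ)
            * ((Finset.univ.filter
          fun e : (Fin m ⊕ Fin (n - m)) ≃ Fin n => S ⊆ Jset e).card : ℝ))
        ≤ r ^ S.card * ((((m : ℝ) / n) ^ S.card * N) * (((m : ℝ) / n) ^ S.card * N)) := by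
          apply mul_le_mul_of_nonneg_left _ (pow_nonneg hr0 _)
          exact mul_le_mul hb hb hc0 (by positivity)
      _ = x ^ S.card * (N * N) := by
          rw [hxdef, mul_pow, ← pow_mul, pow_mul ((m:ℝ)/n) 2]
          ring
  have h6 : ∑ S ∈ (Finset.univ : Finset (Fin n)).powerset, x ^ S.card * (N * N)
      = (1 + x) ^ n * (N * N) := by
    rw [← Finset.sum_mul]
    congr 1
    rw [add_comm 1 x]
    rw [← pow_card_eq_sum_powerset x Finset.univ]
    rw [Finset.card_univ, Fintype.card_fin]
  calc (k:ℝ)^n * ∑ z : Fin n → Fin k,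
      (N⁻¹ * ∑ e : (Fin m ⊕ Fin (n - m)) ≃ Fin n, ci * indF k e z) ^ 2
      = (N⁻¹ * N⁻¹) * ∑ e : (Fin m ⊕ Fin (n - m)) ≃ Fin n,
          ∑ e' : (Fin m ⊕ Fin (n - m)) ≃ Fin n,
            (1 + r) ^ ((Jset e ∩ Jset e').card) := h3
    _ ≤ (N⁻¹ * N⁻¹) * ((1 + x) ^ n * (N * N)) := by
        apply mul_le_mul_of_nonneg_left _ (by positivity)
        rw [h4]
        exact le_of_le_of_eq (Finset.sum_le_sum h5) h6
    _ = (1 + x) ^ n := by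
        field_simp
    _ = (1 + (((k - 1 : ℕ) : ℝ))⁻¹ * ((m : ℝ) / n) ^ 2) ^ n := by rw [hxdef, hr]

lemma main_rewrite (k m n : ℕ) (A : Finset (Fin n → Fin k)) :
    ((Fintype.card ((Fin m ⊕ Fin (n - m)) ≃ Fin n) : ℝ))⁻¹ *
        ∑ e : (Fin m ⊕ Fin (n - m)) ≃ Fin n,
          (((k - 1 : ℕ) : ℝ) ^ m)⁻¹ * ((k : ℝ) ^ (n - m))⁻¹ *
            ∑ x : Fin m → Fin (k - 1), ∑ y : Fin (n - m) → Fin k,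
              (if (fun i => Sum.elim (fun a => Fin.castLE (Nat.sub_le k 1) (x a)) y
                  (e.symm i)) ∈ A then (1 : ℝ) else 0)
      = ∑ z : Fin n → Fin k, (if z ∈ A then (1:ℝ) else 0) * pfun k m n z := by
  classical
  unfold pfun
  have hstr : ∀ e : (Fin m ⊕ Fin (n - m)) ≃ Fin n,
      (∑ x : Fin m → Fin (k - 1), ∑ y : Fin (n - m) → Fin k,
        (if (fun i => Sum.elim (fun a => Fin.castLE (Nat.sub_le k 1) (x a)) y
            (e.symm i)) ∈ A then (1 : ℝ) else 0))
        = ∑ z : Fin n → Fin k, (if z ∈ A then (1:ℝ) else 0) * indF k e z := by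
    intro e
    have h := sum_str e (fun z : Fin n → Fin k => if z ∈ A then (1:ℝ) else 0)
    refine Eq.trans ?_ (h.trans ?_)
    · rfl
    · refine Finset.sum_congr rfl fun z _ => ?_
      unfold indF
      by_cases hc : ∀ i ∈ Jset e, ((z i : ℕ) < k - 1)
      · rw [if_pos hc, if_pos hc, mul_one]
      · rw [if_neg hc, if_neg hc, mul_zero]
  have lhs_eq : ((Fintype.card ((Fin m ⊕ Fin (n - m)) ≃ Fin n) : ℝ))⁻¹ *
      ∑ e : (Fin m ⊕ Fin (n - m)) ≃ Fin n,
        (((k - 1 : ℕ) : ℝ) ^ m)⁻¹ * ((k : ℝ) ^ (n - m))⁻¹ *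
          ∑ x : Fin m → Fin (k - 1), ∑ y : Fin (n - m) → Fin k,
            (if (fun i => Sum.elim (fun a => Fin.castLE (Nat.sub_le k 1) (x a)) y
                (e.symm i)) ∈ A then (1 : ℝ) else 0)
      = ∑ e : (Fin m ⊕ Fin (n - m)) ≃ Fin n, ∑ z : Fin n → Fin k,
          ((Fintype.card ((Fin m ⊕ Fin (n - m)) ≃ Fin n) : ℝ))⁻¹ *
            ((((k - 1 : ℕ) : ℝ) ^ m)⁻¹ * ((k : ℝ) ^ (n - m))⁻¹ *
              ((if z ∈ A then (1:ℝ) else 0) * indF k e z)) := by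
    rw [Finset.mul_sum]
    refine Finset.sum_congr rfl fun e _ => ?_
    rw [hstr e, Finset.mul_sum, Finset.mul_sum]
  rw [lhs_eq, Finset.sum_comm]
  refine Finset.sum_congr rfl fun z _ => ?_
  rw [Finset.mul_sum, Finset.mul_sum]
  refine Finset.sum_congr rfl fun e _ => ?_
  ring

end UniformRestrictedAux

open UniformRestrictedAux

set_option maxHeartbeats 1000000 in
/-- Let `k ≥ 2`, `m ≤ n^{1/4}` and `n ≥ (12/η)^12`.  Choose a uniformly random
partition of the coordinates into an `m`-set `J` and its complement (encoded by a
uniformly random bijection `e : Fin m ⊕ Fin (n−m) ≃ Fin n`), a uniformly random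
`y ∈ [k]^{[n]∖J}` and a uniformly random `x ∈ [k−1]^J`.  Then the distribution of
the combined string `(x, y) ∈ [k]^n` is within total variation distance `η` of the
uniform distribution; i.e. for every `A ⊆ [k]^n` the probability that `(x, y) ∈ A`
differs from `|A|/kⁿ` by at most `η`. -/
theorem uniform_with_restricted_coordinates_close_to_uniform (k m n : ℕ)
    (hk : 2 ≤ k) (hm : 0 < m) (hmn : m ≤ n) (η : ℝ) (hη : 0 < η)
    (hn : (12 / η) ^ (12 : ℕ) ≤ (n : ℝ))
    (hm4 : (m : ℝ) ≤ (n : ℝ) ^ ((1 : ℝ) / 4))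
    (A : Finset (Fin n → Fin k)) :
    |((Fintype.card ((Fin m ⊕ Fin (n - m)) ≃ Fin n) : ℝ))⁻¹ *
        ∑ e : (Fin m ⊕ Fin (n - m)) ≃ Fin n,
          (((k - 1 : ℕ) : ℝ) ^ m)⁻¹ * ((k : ℝ) ^ (n - m))⁻¹ *
            ∑ x : Fin m → Fin (k - 1), ∑ y : Fin (n - m) → Fin k,
              (if (fun i => Sum.elim (fun a => Fin.castLE (Nat.sub_le k 1) (x a)) y
                  (e.symm i)) ∈ A then (1 : ℝ) else 0) -
      (A.card : ℝ) / (k : ℝ) ^ n| ≤ η := by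
  classical
  have hn0 : 0 < n := lt_of_lt_of_le hm hmn
  have hn0' : (0:ℝ) < n := by exact_mod_cast hn0
  have hk0 : (0:ℝ) < k := by exact_mod_cast (show 0 < k by omega)
  have hK0 : (0:ℝ) < (k:ℝ)^n := by positivity
  rw [main_rewrite k m n A]
  have hFA : (A.card : ℝ) = ∑ z : Fin n → Fin k, (if z ∈ A then (1:ℝ) else 0) := by
    rw [Finset.sum_boole]
    congr 2
    ext z; simp
  have hdiv : (A.card : ℝ) / (k:ℝ)^n
      = ∑ z : Fin n → Fin k, (if z ∈ A then (1:ℝ) else 0) * ((k:ℝ)^n)⁻¹ := by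
    rw [← Finset.sum_mul, ← hFA, div_eq_mul_inv]
  rw [hdiv]
  have hsum_p : ∑ z : Fin n → Fin k, pfun k m n z = 1 := sum_pfun hk hmn
  have hsum_u : ∑ z : Fin n → Fin k, ((k:ℝ)^n)⁻¹ = 1 := by
    rw [Finset.sum_const, Finset.card_univ, Fintype.card_pi_const, Fintype.card_fin,
      nsmul_eq_mul]
    push_cast
    field_simp
  have habs : |(∑ z : Fin n → Fin k, (if z ∈ A then (1:ℝ) else 0) * pfun k m n z)
      - ∑ z : Fin n → Fin k, (if z ∈ A then (1:ℝ) else 0) * ((k:ℝ)^n)⁻¹|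
      ≤ ∑ z : Fin n → Fin k, |pfun k m n z - ((k:ℝ)^n)⁻¹| := by
    rw [← Finset.sum_sub_distrib]
    refine le_trans (Finset.abs_sum_le_sum_abs _ _) ?_
    refine Finset.sum_le_sum fun z _ => ?_
    rw [← mul_sub, abs_mul]
    calc |if z ∈ A then (1:ℝ) else 0| * |pfun k m n z - ((k:ℝ)^n)⁻¹|
        ≤ 1 * |pfun k m n z - ((k:ℝ)^n)⁻¹| := by
          apply mul_le_mul_of_nonneg_right _ (abs_nonneg _)
          split <;> simp
      _ = _ := one_mul _
  refine le_trans habs ?_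
  by_cases hcase : (2:ℝ) < η
  · -- η is large: use the trivial bound by 2
    have h1 : ∑ z : Fin n → Fin k, |pfun k m n z - ((k:ℝ)^n)⁻¹| ≤ 2 := by
      calc ∑ z : Fin n → Fin k, |pfun k m n z - ((k:ℝ)^n)⁻¹|
          ≤ ∑ z : Fin n → Fin k, (pfun k m n z + ((k:ℝ)^n)⁻¹) := by
            refine Finset.sum_le_sum fun z _ => ?_
            have h2 : 0 ≤ pfun k m n z := pfun_nonneg z
            have h3 : (0:ℝ) ≤ ((k:ℝ)^n)⁻¹ := by positivity
            rcases abs_cases (pfun k m n z - ((k:ℝ)^n)⁻¹) with ⟨h, _⟩ | ⟨h, _⟩ <;> linarith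
        _ = 2 := by rw [Finset.sum_add_distrib, hsum_p, hsum_u]; norm_num
    linarith
  · push_neg at hcase
    -- numeric preliminaries
    have h12 : (6:ℝ) ≤ 12/η := by rw [le_div_iff₀ hη]; linarith
    have hn612 : (6:ℝ)^(12:ℕ) ≤ (n:ℝ) := le_trans (pow_le_pow_left₀ (by norm_num) h12 12) hn
    have hn4 : (4:ℝ) ≤ (n:ℝ) := le_trans (by norm_num) hn612
    have hnn : (0:ℝ) ≤ (n:ℝ) := le_of_lt hn0'
    have hm2 : (m:ℝ)^2 ≤ (n:ℝ) ^ ((1:ℝ)/2) := by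
      calc (m:ℝ)^2 ≤ ((n:ℝ) ^ ((1:ℝ)/4))^2 :=
            pow_le_pow_left₀ (by positivity) hm4 2
        _ = (n:ℝ) ^ ((1:ℝ)/2) := by
            rw [← Real.rpow_natCast ((n:ℝ) ^ ((1:ℝ)/4)) 2, ← Real.rpow_mul hnn]
            norm_num
    have hhalf : (n:ℝ)^((1:ℝ)/2) * (n:ℝ)^((1:ℝ)/2) = n := by
      rw [← Real.rpow_add hn0']; norm_num
    have hrt2 : (2:ℝ) ≤ (n:ℝ)^((1:ℝ)/2) := by
      calc (2:ℝ) = (4:ℝ)^((1:ℝ)/2) := by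
            rw [show (4:ℝ) = (2:ℝ)^(2:ℕ) by norm_num, ← Real.rpow_natCast (2:ℝ) 2,
              ← Real.rpow_mul (by norm_num)]
            norm_num
        _ ≤ (n:ℝ)^((1:ℝ)/2) :=
            Real.rpow_le_rpow (by norm_num) hn4 (by norm_num)
    have hrtpos : (0:ℝ) < (n:ℝ)^((1:ℝ)/2) := lt_of_lt_of_le two_pos hrt2
    have hb1 : 2*((m:ℝ)^2/n) ≤ 2/(n:ℝ)^((1:ℝ)/2) := by
      rw [show 2*((m:ℝ)^2/n) = 2*(m:ℝ)^2/n by ring, div_le_div_iff₀ hn0' hrtpos]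
      nlinarith [hm2, hhalf, hrtpos]
    have hb2 : 2/(n:ℝ)^((1:ℝ)/2) ≤ 1 := by
      rw [div_le_one hrtpos]; linarith
    have hrtbig : ((12:ℝ)/η)^(6:ℕ) ≤ (n:ℝ)^((1:ℝ)/2) := by
      calc ((12:ℝ)/η)^(6:ℕ) = (((12:ℝ)/η)^(12:ℕ))^((1:ℝ)/2) := by
            rw [← Real.rpow_natCast (12/η) 12, ← Real.rpow_mul (by positivity),
              ← Real.rpow_natCast (12/η) 6]
            norm_num
        _ ≤ (n:ℝ)^((1:ℝ)/2) := Real.rpow_le_rpow (by positivity) hn (by norm_num)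
    have hb3 : 2/(n:ℝ)^((1:ℝ)/2) ≤ η^2 := by
      rw [div_le_iff₀ hrtpos]
      have key : η^2 * (((12:ℝ)/η)^(6:ℕ)) = 12^6/η^4 := by
        field_simp
      have h2 : (2:ℝ) ≤ η^2 * (((12:ℝ)/η)^(6:ℕ)) := by
        rw [key, le_div_iff₀ (by positivity)]
        have hsq : η^2 ≤ 4 := by nlinarith [hcase, hη]
        have hη4 : η^4 ≤ 16 := by nlinarith [hsq, sq_nonneg η]
        nlinarith [hη4]
      calc (2:ℝ) ≤ η^2 * (((12:ℝ)/η)^(6:ℕ)) := h2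
        _ ≤ η^2 * (n:ℝ)^((1:ℝ)/2) := by
            apply mul_le_mul_of_nonneg_left hrtbig (by positivity)
    -- Cauchy–Schwarz
    have hCS : (∑ z : Fin n → Fin k, |pfun k m n z - ((k:ℝ)^n)⁻¹|)^2
        ≤ (k:ℝ)^n * ∑ z : Fin n → Fin k, (pfun k m n z - ((k:ℝ)^n)⁻¹)^2 := by
      have h := Finset.sum_mul_sq_le_sq_mul_sq Finset.univ
        (fun z : Fin n → Fin k => |pfun k m n z - ((k:ℝ)^n)⁻¹|) (fun _ => (1:ℝ))
      simp only [mul_one, one_pow, sq_abs] at h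
      calc (∑ z : Fin n → Fin k, |pfun k m n z - ((k:ℝ)^n)⁻¹|)^2
          ≤ (∑ z : Fin n → Fin k, (pfun k m n z - ((k:ℝ)^n)⁻¹)^2)
              * (∑ _z : Fin n → Fin k, (1:ℝ)) := h
        _ = (k:ℝ)^n * ∑ z : Fin n → Fin k, (pfun k m n z - ((k:ℝ)^n)⁻¹)^2 := by
            rw [Finset.sum_const, Finset.card_univ, Fintype.card_pi_const,
              Fintype.card_fin, nsmul_eq_mul, mul_one]
            push_cast
            ring
    have hsuu : ∑ _z : Fin n → Fin k, ((k:ℝ)^n)⁻¹ * ((k:ℝ)^n)⁻¹ = ((k:ℝ)^n)⁻¹ := by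
      rw [Finset.sum_const, Finset.card_univ, Fintype.card_pi_const, Fintype.card_fin,
        nsmul_eq_mul]
      push_cast
      field_simp
    have hvar : (k:ℝ)^n * ∑ z : Fin n → Fin k, (pfun k m n z - ((k:ℝ)^n)⁻¹)^2
        = (k:ℝ)^n * (∑ z : Fin n → Fin k, (pfun k m n z)^2) - 1 := by
      have hexp : ∀ z : Fin n → Fin k, (pfun k m n z - ((k:ℝ)^n)⁻¹)^2
          = (pfun k m n z)^2 - (2*((k:ℝ)^n)⁻¹)*pfun k m n z
            + ((k:ℝ)^n)⁻¹ * ((k:ℝ)^n)⁻¹ := fun z => by ring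
      rw [Finset.sum_congr rfl fun z _ => hexp z, Finset.sum_add_distrib,
        Finset.sum_sub_distrib, ← Finset.mul_sum, hsum_p, hsuu, mul_one]
      have huk : (k:ℝ)^n * ((k:ℝ)^n)⁻¹ = 1 := by field_simp
      calc (k:ℝ)^n * ((∑ z : Fin n → Fin k, (pfun k m n z)^2) - 2*((k:ℝ)^n)⁻¹
              + ((k:ℝ)^n)⁻¹)
          = (k:ℝ)^n * (∑ z : Fin n → Fin k, (pfun k m n z)^2)
              - ((k:ℝ)^n * ((k:ℝ)^n)⁻¹) := by ring
        _ = (k:ℝ)^n * (∑ z : Fin n → Fin k, (pfun k m n z)^2) - 1 := by rw [huk]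
    have hsm := second_moment hk hm hmn
    have hd1 : (1:ℝ) ≤ ((k - 1 : ℕ) : ℝ) := by exact_mod_cast (show 1 ≤ k - 1 by omega)
    have hxx0 : (0:ℝ) ≤ (((k - 1 : ℕ) : ℝ))⁻¹ * ((m:ℝ)/n)^2 := by positivity
    have hxxle : (n:ℝ) * ((((k - 1 : ℕ) : ℝ))⁻¹ * ((m:ℝ)/n)^2) ≤ (m:ℝ)^2/n := by
      have hr1 : (((k - 1 : ℕ) : ℝ))⁻¹ ≤ 1 := by
        rw [inv_le_one_iff₀]
        right; exact hd1
      calc (n:ℝ) * ((((k - 1 : ℕ) : ℝ))⁻¹ * ((m:ℝ)/n)^2)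
          ≤ (n:ℝ) * (1 * ((m:ℝ)/n)^2) := by
            apply mul_le_mul_of_nonneg_left _ hnn
            exact mul_le_mul_of_nonneg_right hr1 (sq_nonneg _)
        _ = (m:ℝ)^2/n := by field_simp
    have hcond : 2 * ((n:ℝ) * ((((k - 1 : ℕ) : ℝ))⁻¹ * ((m:ℝ)/n)^2)) ≤ 1 := by
      have := le_trans hb1 hb2
      linarith [hxxle]
    have hpow := pow_one_add_le hxx0 n hcond
    have hL1sq : (∑ z : Fin n → Fin k, |pfun k m n z - ((k:ℝ)^n)⁻¹|)^2 ≤ η^2 := by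
      have c1 : (∑ z : Fin n → Fin k, |pfun k m n z - ((k:ℝ)^n)⁻¹|)^2
          ≤ (1 + (((k - 1 : ℕ) : ℝ))⁻¹ * ((m:ℝ)/n)^2)^n - 1 := by
        rw [hvar] at hCS
        linarith [hsm]
      have c2 : (1 + (((k - 1 : ℕ) : ℝ))⁻¹ * ((m:ℝ)/n)^2)^n - 1 ≤ 2*((m:ℝ)^2/n) := by
        have h' : (1 + (((k - 1 : ℕ) : ℝ))⁻¹ * ((m:ℝ)/n)^2)^n
            ≤ 1 + 2*((n:ℝ) * ((((k - 1 : ℕ) : ℝ))⁻¹ * ((m:ℝ)/n)^2)) := by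
          calc (1 + (((k - 1 : ℕ) : ℝ))⁻¹ * ((m:ℝ)/n)^2)^n
              ≤ 1 + 2*(n:ℝ)*((((k - 1 : ℕ) : ℝ))⁻¹ * ((m:ℝ)/n)^2) := hpow
            _ = 1 + 2*((n:ℝ) * ((((k - 1 : ℕ) : ℝ))⁻¹ * ((m:ℝ)/n)^2)) := by ring
        linarith [hxxle]
      have c3 : 2*((m:ℝ)^2/n) ≤ η^2 := le_trans hb1 hb3
      linarith
    have hL1nonneg : 0 ≤ ∑ z : Fin n → Fin k, |pfun k m n z - ((k:ℝ)^n)⁻¹| :=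
      Finset.sum_nonneg fun z _ => abs_nonneg _
    nlinarith [hL1sq, hL1nonneg, hη]
end
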